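/- For every real z > 2, the semigroup M_2(𝕋_{[1,z]}) of 2×2 matrices over the truncated tropical semiring 𝕋_{[1,z]} is strongly permutable. -/

import Mathlib

set_option maxHeartbeats 1000000

universe u

/-! ### Semiring classes.

A *semiring* here is a nonempty set with an associative commutative addition and an
associative multiplication which distributes over addition on both sides; no zero or
identity element is assumed. -/

class PlainSemiring (S : Type u) extends Add S, Mul S where
  nonempty' : Nonempty S
  add_assoc' : ∀ a b c : S, a + b + c = a + (b + c)
  add_comm' : ∀ a b : S, a + b = b + a
  mul_assoc' : ∀ a b c : S, a * b * c = a * (b * c)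
  left_distrib' : ∀ a b c : S, a * (b + c) = a * b + a * c
  right_distrib' : ∀ a b c : S, (a + b) * c = a * c + b * c

/-- A bipotent semiring: `x + y` is always either `x` or `y`.
(The induced total order is given by `x ≤ y ↔ x + y = y`.) -/
class BipotentSemiring (S : Type u) extends PlainSemiring S where
  bipotent : ∀ a b : S, a + b = a ∨ a + b = b

/-- A commutative bipotent semiring. -/
class CommBipotentSemiring (S : Type u) extends BipotentSemiring S where
  mul_comm' : ∀ a b : S, a * b = b * a

/-- `mpow a n` is the `(n+1)`-st power of `a`, so the set of positive powers of `a`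
is exactly `Set.range (mpow a)`, and the multiplicative order of `a` is the
cardinality of `Set.range (mpow a)`. -/
def mpow {S : Type*} [Mul S] (a : S) : ℕ → S
  | 0 => a
  | n + 1 => mpow a n * a

lemma mpow_mul_mpow {S : Type*} [PlainSemiring S] (a : S) (m n : ℕ) :
    mpow a m * mpow a n = mpow a (m + n + 1) := by
  induction n with
  | zero => rfl
  | succ n ih =>
    show mpow a m * (mpow a n * a) = mpow a (m + n + 1) * a
    rw [← PlainSemiring.mul_assoc', ih]

/-! ### Products of finite families, and permutability. -/

/-- Fold step used to define sums/products of possibly empty families in a structure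
with no neutral element; the overall fold is `none` iff the family is empty. -/
def optStep {S : Type*} (op : S → S → S) : Option S → S → Option S :=
  fun acc x => some (acc.elim x (fun a => op a x))

/-- The sum `s 0 + s 1 + ⋯` of a finite family, as an `Option` (`none` iff `k = 0`). -/
def finSum {S : Type*} [Add S] {k : ℕ} (s : Fin k → S) : Option S :=
  (List.ofFn s).foldl (optStep (· + ·)) none

/-- The product `s 0 * s 1 * ⋯` of a finite family, as an `Option` (`none` iff `k = 0`). -/
def finProd {S : Type*} [Mul S] {k : ℕ} (s : Fin k → S) : Option S :=
  (List.ofFn s).foldl (optStep (· * ·)) none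

/-- A multiplicative structure is `k`-permutable if every product of `k` elements is
preserved by some non-identity permutation of its factors. -/
def KPermutable (S : Type*) [Mul S] (k : ℕ) : Prop :=
  ∀ s : Fin k → S, ∃ σ : Equiv.Perm (Fin k), σ ≠ Equiv.refl (Fin k) ∧
    finProd (fun i => s (σ i)) = finProd s

/-- A semigroup is strongly permutable if it is `k`-permutable for some `k ≥ 2`. -/
def StronglyPermutable (S : Type*) [Mul S] : Prop :=
  ∃ k : ℕ, 2 ≤ k ∧ KPermutable S k

/-- A semigroup is weakly permutable if for some `k ≥ 2`, any product of `k` elements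
is computed identically by two distinct permutations of its factors. -/
def WeaklyPermutable (S : Type*) [Mul S] : Prop :=
  ∃ k : ℕ, 2 ≤ k ∧ ∀ s : Fin k → S, ∃ σ τ : Equiv.Perm (Fin k), σ ≠ τ ∧
    finProd (fun i => s (σ i)) = finProd (fun i => s (τ i))

/-- Isomorphism of semirings (bijection preserving addition and multiplication). -/
def RingLikeIso (S T : Type*) [Add S] [Mul S] [Add T] [Mul T] : Prop :=
  ∃ f : S → T, Function.Bijective f ∧ (∀ a b : S, f (a + b) = f a + f b) ∧
    (∀ a b : S, f (a * b) = f a * f b)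

/-! ### Matrices. -/

/-- Square `n × n` matrices over `S`. -/
def MatSR (S : Type u) (n : ℕ) : Type u := Fin n → Fin n → S

/-- Matrix multiplication, `(A*B) i j = Σ_k (A i k * B k j)`.  (For `n ≥ 1` — the only
case of interest — the `getD` default value is never used.) -/
def matMul {S : Type*} [Add S] [Mul S] {n : ℕ} (A B : MatSR S n) : MatSR S n :=
  fun i j => (finSum (fun k : Fin n => A i k * B k j)).getD (A i j * B i j)

/-- The multiplicative semigroup `M_n(S)`. -/
instance {S : Type*} [Add S] [Mul S] {n : ℕ} : Mul (MatSR S n) := ⟨matMul⟩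

/-! ### `S⁰`: adjoining a zero, and upper triangular matrices. -/

/-- `S` with a zero (additively neutral, multiplicatively absorbing) element adjoined. -/
inductive Adj0 (S : Type u) : Type u
  | zero : Adj0 S
  | elem : S → Adj0 S

namespace Adj0

def add' {S : Type*} [Add S] : Adj0 S → Adj0 S → Adj0 S
  | .zero, b => b
  | .elem a, .zero => .elem a
  | .elem a, .elem b => .elem (a + b)

def mul' {S : Type*} [Mul S] : Adj0 S → Adj0 S → Adj0 S
  | .zero, _ => .zero
  | .elem _, .zero => .zero
  | .elem a, .elem b => .elem (a * b)

instance {S : Type*} [Add S] : Add (Adj0 S) := ⟨add'⟩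
instance {S : Type*} [Mul S] : Mul (Adj0 S) := ⟨mul'⟩

@[simp] lemma zero_add {S : Type*} [Add S] (b : Adj0 S) : (zero : Adj0 S) + b = b := rfl
@[simp] lemma add_zero {S : Type*} [Add S] (a : Adj0 S) : a + (zero : Adj0 S) = a := by
  cases a <;> rfl
@[simp] lemma elem_add_elem {S : Type*} [Add S] (a b : S) :
    (elem a : Adj0 S) + elem b = elem (a + b) := rfl
@[simp] lemma zero_mul {S : Type*} [Mul S] (b : Adj0 S) : (zero : Adj0 S) * b = zero := rfl
@[simp] lemma mul_zero {S : Type*} [Mul S] (a : Adj0 S) : a * (zero : Adj0 S) = zero := by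
  cases a <;> rfl
@[simp] lemma elem_mul_elem {S : Type*} [Mul S] (a b : S) :
    (elem a : Adj0 S) * elem b = elem (a * b) := rfl

lemma add_eq_zero_iff {S : Type*} [Add S] (a b : Adj0 S) :
    a + b = zero ↔ a = zero ∧ b = zero := by
  cases a <;> cases b <;> simp

end Adj0

lemma foldl_optStep_adj0 {S : Type*} [Add S] (l : List (Adj0 S)) (a : Adj0 S) :
    ∃ c : Adj0 S, l.foldl (optStep (· + ·)) (some a) = some c ∧
      (c = Adj0.zero ↔ a = Adj0.zero ∧ ∀ x ∈ l, x = Adj0.zero) := by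
  induction l generalizing a with
  | nil => exact ⟨a, rfl, by simp⟩
  | cons x l ih =>
    obtain ⟨c, hc, hiff⟩ := ih (a + x)
    refine ⟨c, ?_, ?_⟩
    · simpa [optStep] using hc
    · rw [hiff, Adj0.add_eq_zero_iff]
      simp only [List.mem_cons, forall_eq_or_imp]
      tauto

lemma finSum_adj0_eq_zero {S : Type*} [Add S] {n : ℕ} (f : Fin n → Adj0 S) (i : Fin n)
    (d : Adj0 S) (h : ∀ k, f k = Adj0.zero) : (finSum f).getD d = Adj0.zero := by
  cases n with
  | zero => exact i.elim0
  | succ m =>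
    rw [finSum, List.ofFn_succ, List.foldl_cons]
    obtain ⟨c, hc, hiff⟩ := foldl_optStep_adj0 (List.ofFn fun i : Fin m => f i.succ) (f 0)
    rw [show optStep (· + ·) none (f 0) = some (f 0) from rfl, hc]
    have : c = Adj0.zero := hiff.mpr ⟨h 0, by
      intro x hx
      rw [List.mem_ofFn] at hx
      obtain ⟨j, rfl⟩ := hx
      exact h _⟩
    simp [this]

lemma finSum_adj0_ne_zero {S : Type*} [Add S] {n : ℕ} (f : Fin n → Adj0 S) (i : Fin n)
    (d : Adj0 S) (h : f i ≠ Adj0.zero) : (finSum f).getD d ≠ Adj0.zero := by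
  cases n with
  | zero => exact i.elim0
  | succ m =>
    rw [finSum, List.ofFn_succ, List.foldl_cons]
    obtain ⟨c, hc, hiff⟩ := foldl_optStep_adj0 (List.ofFn fun i : Fin m => f i.succ) (f 0)
    rw [show optStep (· + ·) none (f 0) = some (f 0) from rfl, hc]
    simp only [Option.getD_some]
    intro hcz
    obtain ⟨h0, hall⟩ := hiff.mp hcz
    induction i using Fin.cases with
    | zero => exact h h0
    | succ j => exact h (hall _ (List.mem_ofFn.mpr ⟨j, rfl⟩))

/-- Upper-triangularity over `S⁰`: entries strictly below the diagonal are the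
adjoined zero; entries on and above the diagonal lie in `S`. -/
def IsUT {S : Type*} {n : ℕ} (A : MatSR (Adj0 S) n) : Prop :=
  (∀ i j : Fin n, (j : ℕ) < (i : ℕ) → A i j = Adj0.zero) ∧
  (∀ i j : Fin n, (i : ℕ) ≤ (j : ℕ) → ∃ s : S, A i j = Adj0.elem s)

lemma IsUT.mul {S : Type*} [Add S] [Mul S] {n : ℕ} {A B : MatSR (Adj0 S) n}
    (hA : IsUT A) (hB : IsUT B) : IsUT (matMul A B) := by
  constructor
  · intro i j hji
    apply finSum_adj0_eq_zero _ i
    intro k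
    rcases le_or_gt (i : ℕ) (k : ℕ) with h | h
    · rw [hB.1 k j (lt_of_lt_of_le hji h), Adj0.mul_zero]
    · rw [hA.1 i k h, Adj0.zero_mul]
  · intro i j hij
    have hne : matMul A B i j ≠ Adj0.zero := by
      apply finSum_adj0_ne_zero _ i
      obtain ⟨s, hs⟩ := hA.2 i i le_rfl
      obtain ⟨t, ht⟩ := hB.2 i j hij
      rw [hs, ht, Adj0.elem_mul_elem]
      simp
    cases hc : matMul A B i j with
    | zero => exact absurd hc hne
    | elem s => exact ⟨s, rfl⟩

/-- The multiplicative semigroup `UT_n(S)` of upper triangular matrices over `S⁰`. -/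
def UTMat (S : Type u) (n : ℕ) : Type u := {A : MatSR (Adj0 S) n // IsUT A}

instance {S : Type*} [Add S] [Mul S] {n : ℕ} : Mul (UTMat S n) :=
  ⟨fun A B => ⟨matMul A.1 B.1, A.2.mul B.2⟩⟩

/-! ### `S^{01}`: adjoining a zero and an identity, and unitriangular matrices. -/

/-- `S` with a zero and a multiplicative identity adjoined (`S^{01}` in the paper).
The sum of `one` and an `elem` is left undefined in the paper; it is given an
arbitrary value here, and never arises in products of unitriangular matrices. -/
inductive Adj01 (S : Type u) : Type u
  | zero : Adj01 S
  | one : Adj01 S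
  | elem : S → Adj01 S

namespace Adj01

def add' {S : Type*} [Add S] : Adj01 S → Adj01 S → Adj01 S
  | .zero, b => b
  | a, .zero => a
  | .one, .one => .one
  | .one, .elem b => .elem b
  | .elem a, .one => .elem a
  | .elem a, .elem b => .elem (a + b)

def mul' {S : Type*} [Mul S] : Adj01 S → Adj01 S → Adj01 S
  | .zero, _ => .zero
  | _, .zero => .zero
  | .one, b => b
  | a, .one => a
  | .elem a, .elem b => .elem (a * b)

instance {S : Type*} [Add S] : Add (Adj01 S) := ⟨add'⟩
instance {S : Type*} [Mul S] : Mul (Adj01 S) := ⟨mul'⟩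

@[simp] lemma zero_add {S : Type*} [Add S] (b : Adj01 S) : (zero : Adj01 S) + b = b := by
  cases b <;> rfl
@[simp] lemma add_zero {S : Type*} [Add S] (a : Adj01 S) : a + (zero : Adj01 S) = a := by
  cases a <;> rfl
@[simp] lemma one_add_one {S : Type*} [Add S] : (one : Adj01 S) + one = one := rfl
@[simp] lemma elem_add_elem {S : Type*} [Add S] (a b : S) :
    (elem a : Adj01 S) + elem b = elem (a + b) := rfl
@[simp] lemma one_add_elem {S : Type*} [Add S] (b : S) :
    (one : Adj01 S) + elem b = elem b := rfl
@[simp] lemma elem_add_one {S : Type*} [Add S] (a : S) :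
    (elem a : Adj01 S) + one = elem a := rfl
@[simp] lemma zero_mul {S : Type*} [Mul S] (b : Adj01 S) : (zero : Adj01 S) * b = zero := by
  cases b <;> rfl
@[simp] lemma mul_zero {S : Type*} [Mul S] (a : Adj01 S) : a * (zero : Adj01 S) = zero := by
  cases a <;> rfl
@[simp] lemma one_mul {S : Type*} [Mul S] (b : Adj01 S) : (one : Adj01 S) * b = b := by
  cases b <;> rfl
@[simp] lemma mul_one {S : Type*} [Mul S] (a : Adj01 S) : a * (one : Adj01 S) = a := by
  cases a <;> rfl
@[simp] lemma elem_mul_elem {S : Type*} [Mul S] (a b : S) :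
    (elem a : Adj01 S) * elem b = elem (a * b) := rfl

lemma mul_ne_one {S : Type*} [Mul S] {a b : Adj01 S} (ha : a ≠ one) (hb : b ≠ one) :
    a * b ≠ one := by
  cases a <;> cases b <;> simp_all

lemma add_ne_one {S : Type*} [Add S] {a b : Adj01 S} (ha : a ≠ one) (hb : b ≠ one) :
    a + b ≠ one := by
  cases a <;> cases b <;> simp_all

lemma add_01 {S : Type*} [Add S] {a b : Adj01 S} (ha : a = zero ∨ a = one)
    (hb : b = zero ∨ b = one) :
    (a + b = zero ∨ a + b = one) ∧ (a + b = one ↔ a = one ∨ b = one) := by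
  rcases ha with rfl | rfl <;> rcases hb with rfl | rfl <;> simp

end Adj01

lemma foldl_optStep_adj01 {S : Type*} [Add S] (l : List (Adj01 S)) (a : Adj01 S)
    (ha : a = Adj01.zero ∨ a = Adj01.one) (hl : ∀ x ∈ l, x = Adj01.zero ∨ x = Adj01.one) :
    ∃ c : Adj01 S, l.foldl (optStep (· + ·)) (some a) = some c ∧
      (c = Adj01.zero ∨ c = Adj01.one) ∧
      (c = Adj01.one ↔ a = Adj01.one ∨ ∃ x ∈ l, x = Adj01.one) := by
  induction l generalizing a with
  | nil => exact ⟨a, rfl, ha, by simp⟩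
  | cons x l ih =>
    have hx := hl x (by simp)
    have key := Adj01.add_01 ha hx
    obtain ⟨c, hc, hc01, hiff⟩ := ih (a + x) key.1 (fun y hy => hl y (by simp [hy]))
    refine ⟨c, by simpa [optStep] using hc, hc01, ?_⟩
    rw [hiff, key.2]
    simp only [List.mem_cons, exists_eq_or_imp]
    tauto

lemma foldl_optStep_adj01_ne_one {S : Type*} [Add S] (l : List (Adj01 S)) (a : Adj01 S)
    (ha : a ≠ Adj01.one) (hl : ∀ x ∈ l, x ≠ Adj01.one) :
    ∃ c : Adj01 S, l.foldl (optStep (· + ·)) (some a) = some c ∧ c ≠ Adj01.one := by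
  induction l generalizing a with
  | nil => exact ⟨a, rfl, ha⟩
  | cons x l ih =>
    have hax : a + x ≠ Adj01.one := Adj01.add_ne_one ha (hl x (by simp))
    obtain ⟨c, hc, hcne⟩ := ih (a + x) hax (fun y hy => hl y (by simp [hy]))
    exact ⟨c, by simpa [optStep] using hc, hcne⟩

lemma finSum_adj01_eq_one {S : Type*} [Add S] {n : ℕ} (f : Fin n → Adj01 S) (i : Fin n)
    (d : Adj01 S) (h01 : ∀ k, f k = Adj01.zero ∨ f k = Adj01.one) (hi : f i = Adj01.one) :
    (finSum f).getD d = Adj01.one := by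
  cases n with
  | zero => exact i.elim0
  | succ m =>
    rw [finSum, List.ofFn_succ, List.foldl_cons]
    obtain ⟨c, hc, _, hiff⟩ := foldl_optStep_adj01 (List.ofFn fun i : Fin m => f i.succ) (f 0)
      (h01 0) (by
        intro x hx
        rw [List.mem_ofFn] at hx
        obtain ⟨j, rfl⟩ := hx
        exact h01 _)
    rw [show optStep (· + ·) none (f 0) = some (f 0) from rfl, hc]
    simp only [Option.getD_some]
    apply hiff.mpr
    induction i using Fin.cases with
    | zero => exact Or.inl hi
    | succ j => exact Or.inr ⟨f j.succ, List.mem_ofFn.mpr ⟨j, rfl⟩, hi⟩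

lemma finSum_adj01_eq_zero {S : Type*} [Add S] {n : ℕ} (f : Fin n → Adj01 S) (i : Fin n)
    (d : Adj01 S) (h : ∀ k, f k = Adj01.zero) : (finSum f).getD d = Adj01.zero := by
  cases n with
  | zero => exact i.elim0
  | succ m =>
    rw [finSum, List.ofFn_succ, List.foldl_cons]
    obtain ⟨c, hc, hc01, hiff⟩ := foldl_optStep_adj01 (List.ofFn fun i : Fin m => f i.succ)
      (f 0) (Or.inl (h 0)) (by
        intro x hx
        rw [List.mem_ofFn] at hx
        obtain ⟨j, rfl⟩ := hx
        exact Or.inl (h _))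
    rw [show optStep (· + ·) none (f 0) = some (f 0) from rfl, hc]
    simp only [Option.getD_some]
    rcases hc01 with h' | h'
    · exact h'
    · exfalso
      rcases hiff.mp h' with h'' | ⟨x, hx, hx1⟩
      · rw [h 0] at h''; cases h''
      · rw [List.mem_ofFn] at hx
        obtain ⟨j, rfl⟩ := hx
        rw [h _] at hx1; cases hx1

lemma finSum_adj01_ne_one {S : Type*} [Add S] {n : ℕ} (f : Fin n → Adj01 S) (i : Fin n)
    (d : Adj01 S) (h : ∀ k, f k ≠ Adj01.one) : (finSum f).getD d ≠ Adj01.one := by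
  cases n with
  | zero => exact i.elim0
  | succ m =>
    rw [finSum, List.ofFn_succ, List.foldl_cons]
    obtain ⟨c, hc, hcne⟩ := foldl_optStep_adj01_ne_one (List.ofFn fun i : Fin m => f i.succ)
      (f 0) (h 0) (by
        intro x hx
        rw [List.mem_ofFn] at hx
        obtain ⟨j, rfl⟩ := hx
        exact h _)
    rw [show optStep (· + ·) none (f 0) = some (f 0) from rfl, hc]
    simpa using hcne

/-- Unitriangularity over `S^{01}`: the adjoined zero strictly below the diagonal, the
adjoined identity on the diagonal, and entries of `S⁰` (i.e. anything except the
adjoined identity) strictly above the diagonal. -/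
def IsU {S : Type*} {n : ℕ} (A : MatSR (Adj01 S) n) : Prop :=
  (∀ i j : Fin n, (j : ℕ) < (i : ℕ) → A i j = Adj01.zero) ∧
  (∀ i : Fin n, A i i = Adj01.one) ∧
  (∀ i j : Fin n, (i : ℕ) < (j : ℕ) → A i j ≠ Adj01.one)

lemma IsU.mul {S : Type*} [Add S] [Mul S] {n : ℕ} {A B : MatSR (Adj01 S) n}
    (hA : IsU A) (hB : IsU B) : IsU (matMul A B) := by
  refine ⟨?_, ?_, ?_⟩
  · intro i j hji
    apply finSum_adj01_eq_zero _ i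
    intro k
    rcases le_or_gt (i : ℕ) (k : ℕ) with h | h
    · rw [hB.1 k j (lt_of_lt_of_le hji h), Adj01.mul_zero]
    · rw [hA.1 i k h, Adj01.zero_mul]
  · intro i
    apply finSum_adj01_eq_one _ i
    · intro k
      rcases lt_trichotomy (k : ℕ) (i : ℕ) with h | h | h
      · rw [hA.1 i k h, Adj01.zero_mul]; exact Or.inl rfl
      · have : k = i := Fin.ext h
        subst this
        rw [hA.2.1 k, hB.2.1 k, Adj01.one_mul]; exact Or.inr rfl
      · rw [hB.1 k i h, Adj01.mul_zero]; exact Or.inl rfl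
    · rw [hA.2.1 i, hB.2.1 i, Adj01.one_mul]
  · intro i j hij
    apply finSum_adj01_ne_one _ i
    intro k
    rcases lt_trichotomy (k : ℕ) (i : ℕ) with h | h | h
    · rw [hA.1 i k h, Adj01.zero_mul]; exact fun h => by cases h
    · have : k = i := Fin.ext h
      subst this
      rw [hA.2.1 k, Adj01.one_mul]
      exact hB.2.2 k j (by omega)
    · rcases lt_trichotomy (k : ℕ) (j : ℕ) with h' | h' | h'
      · exact Adj01.mul_ne_one (hA.2.2 i k h) (hB.2.2 k j h')
      · have : k = j := Fin.ext h'
        subst this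
        rw [hB.2.1 k, Adj01.mul_one]
        exact hA.2.2 i k h
      · rw [hB.1 k j h', Adj01.mul_zero]; exact fun h => by cases h

/-- The multiplicative monoid `U_n(S)` of unitriangular matrices over `S^{01}`. -/
def UMat (S : Type u) (n : ℕ) : Type u := {A : MatSR (Adj01 S) n // IsU A}

instance {S : Type*} [Add S] [Mul S] {n : ℕ} : Mul (UMat S n) :=
  ⟨fun A B => ⟨matMul A.1 B.1, A.2.mul B.2⟩⟩

/-! ### Monogenic subsemirings. -/

/-- The carrier of the monogenic subsemiring `⟨a⟩` generated by `a` is the set of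
positive powers of `a`; in a bipotent semiring it is closed under addition. -/
instance genAdd {S : Type*} [BipotentSemiring S] (a : S) : Add ↥(Set.range (mpow a)) :=
  ⟨fun p q => ⟨p.1 + q.1, by
    rcases BipotentSemiring.bipotent p.1 q.1 with h | h <;> rw [h]
    exacts [p.2, q.2]⟩⟩

instance genMul {S : Type*} [BipotentSemiring S] (a : S) : Mul ↥(Set.range (mpow a)) :=
  ⟨fun p q => ⟨p.1 * q.1, by
    obtain ⟨m, hm⟩ := p.2
    obtain ⟨n, hn⟩ := q.2
    exact ⟨m + n + 1, by rw [← hm, ← hn, mpow_mul_mpow]⟩⟩⟩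

/-! ### Concrete bipotent semirings. -/

/-- The tropical semiring `ℕ_max` of positive natural numbers: addition is `max`,
multiplication is ordinary addition. -/
def NMax : Type := {n : ℕ // 0 < n}

instance : Add NMax := ⟨fun a b => ⟨max a.1 b.1, by have := a.2; have := b.2; omega⟩⟩
instance : Mul NMax := ⟨fun a b => ⟨a.1 + b.1, by have := a.2; have := b.2; omega⟩⟩

/-- The tropical semiring `(-ℕ)_max` of negative integers: addition is `max`,
multiplication is ordinary addition. -/
def NegNMax : Type := {z : ℤ // z < 0}

instance : Add NegNMax := ⟨fun a b => ⟨max a.1 b.1, by have := a.2; have := b.2; omega⟩⟩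
instance : Mul NegNMax := ⟨fun a b => ⟨a.1 + b.1, by have := a.2; have := b.2; omega⟩⟩

/-- The truncated tropical semiring `[k]_max` on `{1,…,k}`: addition is `max`,
multiplication is `a·b = min (a+b) k`. -/
def KMax (k : ℕ) : Type := {n : ℕ // 0 < n ∧ n ≤ k}

instance {k : ℕ} : Add (KMax k) :=
  ⟨fun a b => ⟨max a.1 b.1, by have := a.2; have := b.2; omega⟩⟩
instance {k : ℕ} : Mul (KMax k) :=
  ⟨fun a b => ⟨min (a.1 + b.1) k, by have := a.2; have := b.2; omega⟩⟩

/-- The truncated tropical semiring `[-k]_max` on `{-k,…,-1}`: addition is `max`,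
multiplication is `a·b = max (a+b) (-k)`. -/
def NegKMax (k : ℕ) : Type := {z : ℤ // -(k : ℤ) ≤ z ∧ z ≤ -1}

instance {k : ℕ} : Add (NegKMax k) :=
  ⟨fun a b => ⟨max a.1 b.1, by have := a.2; have := b.2; omega⟩⟩
instance {k : ℕ} : Mul (NegKMax k) :=
  ⟨fun a b => ⟨max (a.1 + b.1) (-(k : ℤ)), by have := a.2; have := b.2; omega⟩⟩

/-- The two-element boolean semifield `𝔹`: `{0,1}` with `0 < 1`, addition `max` (= "or")
and the usual multiplication (= "and"). -/
def BoolSR : Type := Bool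

instance : Add BoolSR := ⟨fun a b => (Bool.or a b : Bool)⟩
instance : Mul BoolSR := ⟨fun a b => (Bool.and a b : Bool)⟩

/-- A chain semiring: a linearly ordered set with addition `max` and multiplication `min`. -/
def ChainSR (L : Type u) [LinearOrder L] : Type u := L

instance {L : Type u} [LinearOrder L] : Add (ChainSR L) := ⟨fun a b => (max a b : L)⟩
instance {L : Type u} [LinearOrder L] : Mul (ChainSR L) := ⟨fun a b => (min a b : L)⟩

/-- The three-element commutative bipotent semiring of Proposition 1: order `A < B < C`
(addition is `max`), every element multiplicatively idempotent, and all products of two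
distinct elements equal to `B`. -/
inductive Three : Type
  | A : Three
  | B : Three
  | C : Three
deriving DecidableEq

instance : Fintype Three := ⟨{Three.A, Three.B, Three.C}, fun x => by cases x <;> simp⟩

def Three.add' : Three → Three → Three
  | .A, y => y
  | x, .A => x
  | .B, y => y
  | x, .B => x
  | .C, .C => .C

def Three.mul' : Three → Three → Three
  | .A, .A => .A
  | .B, .B => .B
  | .C, .C => .C
  | _, _ => .B

instance : Add Three := ⟨Three.add'⟩
instance : Mul Three := ⟨Three.mul'⟩

instance : CommBipotentSemiring Three where
  nonempty' := ⟨Three.A⟩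
  add_assoc' := by decide
  add_comm' := by decide
  mul_assoc' := by decide
  left_distrib' := by decide
  right_distrib' := by decide
  bipotent := by decide
  mul_comm' := by decide

/-- A bundled (possibly zero-less and identity-less) semiring, used to quantify over
semirings inside hypotheses. -/
structure BundledSemiring : Type 1 where
  carrier : Type
  add : carrier → carrier → carrier
  mul : carrier → carrier → carrier
  nonempty' : Nonempty carrier
  add_assoc' : ∀ a b c, add (add a b) c = add a (add b c)
  add_comm' : ∀ a b, add a b = add b a
  mul_assoc' : ∀ a b c, mul (mul a b) c = mul a (mul b c)
  left_distrib' : ∀ a b c, mul a (add b c) = add (mul a b) (mul a c)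
  right_distrib' : ∀ a b c, mul (add a b) c = add (mul a c) (mul b c)

/-! ### Semifields. -/

/-- `z` is a zero element: additively neutral and multiplicatively absorbing. -/
def IsZeroElem {S : Type*} [Add S] [Mul S] (z : S) : Prop :=
  ∀ x : S, z + x = x ∧ x + z = x ∧ z * x = z ∧ x * z = z

/-- `S` is a semifield: a commutative semiring, possibly without zero, whose set of
non-zero elements forms a group under multiplication (with identity `e`). -/
def IsSemifield (S : Type*) [Add S] [Mul S] : Prop :=
  ∃ e : S, ¬ IsZeroElem e ∧
    (∀ x : S, ¬ IsZeroElem x → e * x = x ∧ x * e = x) ∧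
    (∀ x y : S, ¬ IsZeroElem x → ¬ IsZeroElem y → ¬ IsZeroElem (x * y)) ∧
    (∀ x : S, ¬ IsZeroElem x → ∃ y : S, ¬ IsZeroElem y ∧ x * y = e ∧ y * x = e)

/-! ### Truncated tropical semirings. -/

/-- The underlying set `[x,y] ∪ {0}` of the truncated tropical semiring `𝕋_{[x,y]}`
(without the zero element `-∞`), for `0 ≤ x`.  Addition is `max`; multiplication is
`y`-truncated addition `a ⊗ b = min (a+b) y`, with the element `0` acting as the
multiplicative identity. -/
def TTb (x y : ℝ) (_hx : 0 ≤ x) : Type := {r : ℝ // r = 0 ∨ (x ≤ r ∧ r ≤ y)}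

namespace TTb

protected def add {x y : ℝ} {hx : 0 ≤ x} (a b : TTb x y hx) : TTb x y hx :=
  ⟨max a.1 b.1, by rcases max_choice a.1 b.1 with h | h <;> rw [h]
                   exacts [a.2, b.2]⟩

protected noncomputable def mul {x y : ℝ} {hx : 0 ≤ x} (a b : TTb x y hx) : TTb x y hx :=
  if ha : a.1 = 0 then b else if hb : b.1 = 0 then a else
    ⟨min (a.1 + b.1) y, by
      rcases a.2 with h | h
      · exact absurd h ha
      rcases b.2 with h' | h'
      · exact absurd h' hb
      right
      exact ⟨le_min (by linarith [h.1, h'.1]) (by linarith [h.1, h.2]), min_le_right _ _⟩⟩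

instance {x y : ℝ} {hx : 0 ≤ x} : Add (TTb x y hx) := ⟨TTb.add⟩
noncomputable instance {x y : ℝ} {hx : 0 ≤ x} : Mul (TTb x y hx) := ⟨TTb.mul⟩

end TTb

/-- The truncated tropical semiring `𝕋_{[x,y]}` (for `0 ≤ x < y`): the real interval
`[x,y]` together with a multiplicative identity `0` and a zero `-∞`, with addition
`max` and multiplication the `y`-truncated addition `a ⊗ b = min (a+b) y`. -/
abbrev TT (x y : ℝ) (hx : 0 ≤ x) : Type := Adj0 (TTb x y hx)

/-- The multiplicative identity `0` of `𝕋_{[x,y]}`. -/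
noncomputable def ttId (x y : ℝ) (hx : 0 ≤ x) : TT x y hx := Adj0.elem ⟨0, Or.inl rfl⟩

lemma ttId_mul {x y : ℝ} {hx : 0 ≤ x} (b : TT x y hx) : ttId x y hx * b = b := by
  cases b with
  | zero => rfl
  | elem e =>
    show Adj0.elem (TTb.mul ⟨0, Or.inl rfl⟩ e) = Adj0.elem e
    first | (unfold TTb.mul; rw [dif_pos rfl]) | simp [TTb.mul]

/-- The subsemigroup `S` of `M_2(𝕋_{[1,z]})` of matrices of the form `[[0,a],[-∞,b]]`. -/
noncomputable def UpperS (z : ℝ) (hz : (0:ℝ) ≤ 1) : Type :=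
  {A : MatSR (TT 1 z hz) 2 // A 0 0 = ttId 1 z hz ∧ A 1 0 = Adj0.zero}

/-- The subsemigroup `S'` of `M_2(𝕋_{[1,z]})` of matrices of the form `[[0,-∞],[a,b]]`. -/
noncomputable def LowerS (z : ℝ) (hz : (0:ℝ) ≤ 1) : Type :=
  {A : MatSR (TT 1 z hz) 2 // A 0 0 = ttId 1 z hz ∧ A 0 1 = Adj0.zero}

noncomputable instance {z : ℝ} {hz : (0:ℝ) ≤ 1} : Mul (UpperS z hz) :=
  ⟨fun A B => ⟨A.1 * B.1, by
    obtain ⟨hA1, hA2⟩ := A.2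
    obtain ⟨hB1, hB2⟩ := B.2
    constructor
    · show A.1 0 0 * B.1 0 0 + A.1 0 1 * B.1 1 0 = ttId 1 z hz
      rw [hA1, hB1, hB2, ttId_mul, Adj0.mul_zero, Adj0.add_zero]
    · show A.1 1 0 * B.1 0 0 + A.1 1 1 * B.1 1 0 = Adj0.zero
      rw [hA2, hB2, Adj0.zero_mul, Adj0.mul_zero, Adj0.add_zero]⟩⟩

noncomputable instance {z : ℝ} {hz : (0:ℝ) ≤ 1} : Mul (LowerS z hz) :=
  ⟨fun A B => ⟨A.1 * B.1, by
    obtain ⟨hA1, hA2⟩ := A.2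
    obtain ⟨hB1, hB2⟩ := B.2
    constructor
    · show A.1 0 0 * B.1 0 0 + A.1 0 1 * B.1 1 0 = ttId 1 z hz
      rw [hA1, hB1, hA2, ttId_mul, Adj0.zero_mul, Adj0.add_zero]
    · show A.1 0 0 * B.1 0 1 + A.1 0 1 * B.1 1 1 = Adj0.zero
      rw [hA1, hB2, hA2, ttId_mul, Adj0.zero_mul, Adj0.add_zero]⟩⟩

/-! ### Auxiliary development for Statement 18. -/

namespace Stmt18

variable {z : ℝ}

abbrev TB (z : ℝ) : Type := TTb 1 z zero_le_one
abbrev TTz (z : ℝ) : Type := TT 1 z zero_le_one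
abbrev MM (z : ℝ) : Type := MatSR (TTz z) 2

/-! #### Value lemmas for `TTb`. -/

lemma tb_nonneg (a : TB z) : 0 ≤ a.1 := by
  rcases a.2 with h | h
  · rw [h]
  · linarith [h.1]

lemma tb_le_z (hz : 0 ≤ z) (a : TB z) : a.1 ≤ z := by
  rcases a.2 with h | h
  · linarith [h]
  · exact h.2

lemma tb_add_val (a b : TB z) : (a + b).1 = max a.1 b.1 := rfl

lemma tb_mul_val (hz : 0 ≤ z) (a b : TB z) : (a * b).1 = min (a.1 + b.1) z := by
  show (TTb.mul a b).1 = _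
  unfold TTb.mul
  split_ifs with h1 h2
  · rw [h1, zero_add, eq_comm, min_eq_left (tb_le_z hz b)]
  · simp only [h2, ↓reduceDIte, add_zero]; exact (min_eq_left (tb_le_z hz a)).symm
  · simp only [h2, ↓reduceDIte]

lemma tb_ext {a b : TB z} (h : a.1 = b.1) : a = b := Subtype.ext h

lemma tb_add_comm (a b : TB z) : a + b = b + a :=
  tb_ext (by rw [tb_add_val, tb_add_val, max_comm])

lemma tb_add_assoc (a b c : TB z) : a + b + c = a + (b + c) :=
  tb_ext (by rw [tb_add_val, tb_add_val, tb_add_val, tb_add_val, max_assoc])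

lemma tb_mul_comm (hz : 0 ≤ z) (a b : TB z) : a * b = b * a :=
  tb_ext (by rw [tb_mul_val hz, tb_mul_val hz, add_comm])

private lemma real_min_assoc {a b c w : ℝ} (ha : 0 ≤ a) (hc : 0 ≤ c) :
    min (min (a + b) w + c) w = min (a + min (b + c) w) w := by
  rcases le_total (a + b) w with h | h <;> rcases le_total (b + c) w with h2 | h2 <;>
    rw [min_def, min_def, min_def, min_def] <;> split_ifs <;> linarith

lemma tb_mul_assoc (hz : 0 ≤ z) (a b c : TB z) : a * b * c = a * (b * c) := by
  apply tb_ext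
  rw [tb_mul_val hz, tb_mul_val hz, tb_mul_val hz, tb_mul_val hz]
  exact real_min_assoc (tb_nonneg a) (tb_nonneg c)

lemma tb_ldistrib (hz : 0 ≤ z) (a b c : TB z) : a * (b + c) = a * b + a * c := by
  apply tb_ext
  rw [tb_mul_val hz, tb_add_val, tb_add_val, tb_mul_val hz, tb_mul_val hz]
  rw [← max_add_add_left, min_max_distrib_right]

lemma tb_rdistrib (hz : 0 ≤ z) (a b c : TB z) : (a + b) * c = a * c + b * c := by
  rw [tb_mul_comm hz, tb_ldistrib hz, tb_mul_comm hz c a, tb_mul_comm hz c b]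

/-! #### Semiring laws at the `TT` (= `Adj0`) level. -/

lemma t_add_comm (a b : TTz z) : a + b = b + a := by
  cases a <;> cases b <;> simp [tb_add_comm]

lemma t_add_assoc (a b c : TTz z) : a + b + c = a + (b + c) := by
  cases a <;> cases b <;> cases c <;> simp [tb_add_assoc]

lemma t_mul_comm (hz : 0 ≤ z) (a b : TTz z) : a * b = b * a := by
  cases a <;> cases b <;> simp [tb_mul_comm hz]

lemma t_mul_assoc (hz : 0 ≤ z) (a b c : TTz z) : a * b * c = a * (b * c) := by
  cases a <;> cases b <;> cases c <;> simp [tb_mul_assoc hz]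

lemma t_ldistrib (hz : 0 ≤ z) (a b c : TTz z) : a * (b + c) = a * b + a * c := by
  cases a <;> cases b <;> cases c <;> simp [tb_ldistrib hz]

lemma t_rdistrib (hz : 0 ≤ z) (a b c : TTz z) : (a + b) * c = a * c + b * c := by
  cases a <;> cases b <;> cases c <;> simp [tb_rdistrib hz]

lemma t_add_add (a b c d : TTz z) : (a + b) + (c + d) = (a + c) + (b + d) := by
  rw [t_add_assoc, ← t_add_assoc b c d, t_add_comm b c, t_add_assoc c b d, ← t_add_assoc]

/-! #### 2×2 matrix multiplication. -/

lemma mul_apply (A B : MM z) (i j : Fin 2) :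
    (A * B) i j = A i 0 * B 0 j + A i 1 * B 1 j := by
  show matMul A B i j = _
  unfold matMul finSum
  simp [List.ofFn_succ, optStep]

lemma m_mul_assoc (hz : 0 ≤ z) (A B C : MM z) : A * B * C = A * (B * C) := by
  funext i j
  rw [mul_apply, mul_apply, mul_apply, mul_apply, mul_apply, mul_apply,
    t_rdistrib hz, t_rdistrib hz, t_ldistrib hz, t_ldistrib hz,
    t_mul_assoc hz, t_mul_assoc hz, t_mul_assoc hz, t_mul_assoc hz,
    t_add_add]

/-! #### Products of lists of matrices, via the `Option` monoid. -/

noncomputable def op : Option (MM z) → Option (MM z) → Option (MM z)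
  | none, b => b
  | some a, none => some a
  | some a, some b => some (a * b)

@[simp] lemma op_none_left (x : Option (MM z)) : op none x = x := rfl
@[simp] lemma op_none_right (x : Option (MM z)) : op x none = x := by cases x <;> rfl
@[simp] lemma op_some_some (a b : MM z) : op (some a) (some b) = some (a * b) := rfl

lemma op_assoc (hz : 0 ≤ z) (x y w : Option (MM z)) :
    op (op x y) w = op x (op y w) := by
  cases x <;> cases y <;> cases w <;> simp [op, m_mul_assoc hz]

noncomputable def pr (l : List (MM z)) : Option (MM z) := l.foldl (optStep (· * ·)) none

lemma optStep_eq (o : Option (MM z)) (x : MM z) :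
    optStep (· * ·) o x = op o (some x) := by cases o <;> rfl

@[simp] lemma pr_nil : pr ([] : List (MM z)) = none := rfl

lemma foldl_op (hz : 0 ≤ z) (l : List (MM z)) :
    ∀ o : Option (MM z), l.foldl (optStep (· * ·)) o = op o (pr l) := by
  induction l with
  | nil => intro o; simp [pr]
  | cons x l ih =>
    intro o
    have hpr : pr (x :: l) = op (some x) (pr l) := by
      show (x :: l).foldl (optStep (· * ·)) none = _
      rw [List.foldl_cons, optStep_eq, op_none_left, ih (some x)]
    rw [List.foldl_cons, optStep_eq, ih, hpr, op_assoc hz]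

lemma pr_cons (hz : 0 ≤ z) (x : MM z) (l : List (MM z)) :
    pr (x :: l) = op (some x) (pr l) := by
  show (x :: l).foldl (optStep (· * ·)) none = _
  rw [List.foldl_cons, optStep_eq, op_none_left, foldl_op hz]

lemma pr_append (hz : 0 ≤ z) (l₁ l₂ : List (MM z)) :
    pr (l₁ ++ l₂) = op (pr l₁) (pr l₂) := by
  rw [pr, List.foldl_append, foldl_op hz]; rfl

lemma finProd_eq_pr {k : ℕ} (s : Fin k → MM z) : finProd s = pr (List.ofFn s) := rfl

/-! #### Segments of a tuple, and their products. -/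

def junk : MM z := fun _ _ => Adj0.zero

def tfun {k : ℕ} (s : Fin k → MM z) : ℕ → MM z :=
  fun j => if h : j < k then s ⟨j, h⟩ else junk

def seg {k : ℕ} (s : Fin k → MM z) (a b : ℕ) : List (MM z) :=
  (List.range' a (b - a)).map (tfun s)

lemma seg_append {k : ℕ} (s : Fin k → MM z) {a b c : ℕ} (hab : a ≤ b) (hbc : b ≤ c) :
    seg s a c = seg s a b ++ seg s b c := by
  unfold seg
  rw [← List.map_append]
  congr 1
  have h2 : c - a = (b - a) + (c - b) := by omega
  rw [h2, ← List.range'_append_1]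
  congr 2
  omega

lemma ofFn_eq_seg {k : ℕ} (s : Fin k → MM z) : List.ofFn s = seg s 0 k := by
  apply List.ext_getElem
  · simp [seg]
  · intro i h1 h2
    have hik : i < k := by simpa using h1
    simp [seg, tfun, List.getElem_range', hik]

noncomputable def PB {k : ℕ} (s : Fin k → MM z) (a b : ℕ) : MM z := (pr (seg s a b)).getD junk

lemma pr_seg (hz : 0 ≤ z) {k : ℕ} (s : Fin k → MM z) {a b : ℕ} (hab : a < b) :
    pr (seg s a b) = some (PB s a b) := by
  obtain ⟨n, hn⟩ : ∃ n, b - a = n + 1 := ⟨b - a - 1, by omega⟩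
  have hseg : seg s a b = tfun s a :: (List.range' (a + 1) n).map (tfun s) := by
    rw [seg, hn, List.range'_succ, List.map_cons]
  rw [PB, hseg, pr_cons hz]
  cases hpr : pr ((List.range' (a + 1) n).map (tfun s)) <;> simp [op]

lemma PB_mul (hz : 0 ≤ z) {k : ℕ} (s : Fin k → MM z) {a b c : ℕ}
    (hab : a < b) (hbc : b < c) : PB s a c = PB s a b * PB s b c := by
  have h := pr_append hz (seg s a b) (seg s b c)
  rw [← seg_append s hab.le hbc.le, pr_seg hz s (hab.trans hbc), pr_seg hz s hab,
    pr_seg hz s hbc, op_some_some] at h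
  exact Option.some_injective _ h

/-! #### The block-swapping permutation. -/

def Fnat (a b c j : ℕ) : ℕ :=
  if j < a then j else if j < a + (c - b) then j + (b - a) else if j < c then j - (c - b) else j

def Gnat (a b c j : ℕ) : ℕ :=
  if j < a then j else if j < b then j + (c - b) else if j < c then j - (b - a) else j

def sigma {k : ℕ} {a b c : ℕ} (ha : a < b) (hb : b < c) (hc : c ≤ k) :
    Equiv.Perm (Fin k) where
  toFun := fun i => ⟨Fnat a b c i.1, by
    have h2 := i.2; unfold Fnat; split_ifs <;> omega⟩
  invFun := fun i => ⟨Gnat a b c i.1, by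
    have h2 := i.2; unfold Gnat; split_ifs <;> omega⟩
  left_inv := fun i => by
    apply Fin.ext
    show Gnat a b c (Fnat a b c i.1) = i.1
    unfold Fnat Gnat; split_ifs <;> omega
  right_inv := fun i => by
    apply Fin.ext
    show Fnat a b c (Gnat a b c i.1) = i.1
    unfold Fnat Gnat; split_ifs <;> omega

lemma sigma_ne_refl {k : ℕ} {a b c : ℕ} (ha : a < b) (hb : b < c) (hc : c ≤ k) :
    sigma ha hb hc ≠ Equiv.refl (Fin k) := by
  intro h
  have hak : a < k := by omega
  have h2 : (sigma ha hb hc ⟨a, hak⟩ : Fin k) = ⟨a, hak⟩ := by rw [h]; rfl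
  have h3 : Fnat a b c a = a := congrArg Fin.val h2
  unfold Fnat at h3
  split_ifs at h3 <;> omega

lemma seg_length {k : ℕ} (s : Fin k → MM z) (a b : ℕ) :
    (seg s a b).length = b - a := by simp [seg]

lemma seg_getElem {k : ℕ} (s : Fin k → MM z) (a b i : ℕ) (h : i < (seg s a b).length) :
    (seg s a b)[i] = tfun s (a + i) := by
  simp [seg, List.getElem_range']

lemma ofFn_sigma {k : ℕ} (s : Fin k → MM z) {a b c : ℕ}
    (ha : a < b) (hb : b < c) (hc : c ≤ k) :
    List.ofFn (fun i => s (sigma ha hb hc i)) =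
      seg s 0 a ++ (seg s b c ++ (seg s a b ++ seg s c k)) := by
  apply List.ext_getElem
  · simp [seg]; omega
  · intro j h1 h2
    have hj : j < k := by simpa using h1
    rw [List.getElem_ofFn]
    have hs : s (sigma ha hb hc ⟨j, hj⟩) = tfun s (Fnat a b c j) := by
      have hlt : Fnat a b c j < k := by unfold Fnat; split_ifs <;> omega
      have : sigma ha hb hc ⟨j, hj⟩ = ⟨Fnat a b c j, hlt⟩ := rfl
      rw [this, tfun, dif_pos hlt]
    rw [hs]
    have l1 : (seg s 0 a).length = a := seg_length s 0 a
    have l2 : (seg s b c).length = c - b := seg_length s b c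
    have l3 : (seg s a b).length = b - a := seg_length s a b
    have l4 : (seg s c k).length = k - c := seg_length s c k
    simp only [List.getElem_append]
    split_ifs with p1 p2 p3 <;>
      · rw [seg_getElem]
        exact congrArg (tfun s) (by unfold Fnat; split_ifs <;> omega)

lemma swap_blocks (hz : 0 ≤ z) {k : ℕ} (s : Fin k → MM z) {a b c : ℕ}
    (ha : a < b) (hb : b < c) (hc : c ≤ k)
    (H : op (some (PB s b c * PB s a b)) (pr (seg s c k)) =
         op (some (PB s a b * PB s b c)) (pr (seg s c k))) :
    ∃ σ : Equiv.Perm (Fin k), σ ≠ Equiv.refl (Fin k) ∧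
      finProd (fun i => s (σ i)) = finProd s := by
  refine ⟨sigma ha hb hc, sigma_ne_refl ha hb hc, ?_⟩
  rw [finProd_eq_pr, finProd_eq_pr, ofFn_sigma s ha hb hc, ofFn_eq_seg s]
  have e1 : seg s 0 k = seg s 0 a ++ (seg s a b ++ (seg s b c ++ seg s c k)) := by
    rw [seg_append s (Nat.zero_le a) (by omega : a ≤ k),
        seg_append s (by omega : a ≤ b) (by omega : b ≤ k),
        seg_append s (by omega : b ≤ c) hc]
  rw [e1, pr_append hz, pr_append hz, pr_append hz, pr_append hz, pr_append hz,
      pr_append hz, pr_seg hz s ha, pr_seg hz s hb]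
  congr 1
  rw [← op_assoc hz (some (PB s b c)), ← op_assoc hz (some (PB s a b)),
      op_some_some, op_some_some]
  exact H

lemma swap_comm (hz : 0 ≤ z) {k : ℕ} (s : Fin k → MM z) {a b c : ℕ}
    (ha : a < b) (hb : b < c) (hc : c ≤ k)
    (H : PB s b c * PB s a b = PB s a b * PB s b c) :
    ∃ σ : Equiv.Perm (Fin k), σ ≠ Equiv.refl (Fin k) ∧
      finProd (fun i => s (σ i)) = finProd s :=
  swap_blocks hz s ha hb hc (by rw [H])

lemma swap_absorb_right (hz : 0 ≤ z) {k : ℕ} (s : Fin k → MM z) {a b c d : ℕ}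
    (ha : a < b) (hb : b < c) (hcd : c < d) (hd : d ≤ k)
    (H : (PB s b c * PB s a b) * PB s c d = (PB s a b * PB s b c) * PB s c d) :
    ∃ σ : Equiv.Perm (Fin k), σ ≠ Equiv.refl (Fin k) ∧
      finProd (fun i => s (σ i)) = finProd s := by
  apply swap_blocks hz s ha hb (by omega : c ≤ k)
  rw [seg_append s hcd.le hd, pr_append hz, pr_seg hz s hcd,
      ← op_assoc hz, ← op_assoc hz, op_some_some, op_some_some, H]

lemma swap_absorb_left (hz : 0 ≤ z) {k : ℕ} (s : Fin k → MM z) {w a b c : ℕ}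
    (hw : w < a) (ha : a < b) (hb : b < c) (hc : c ≤ k)
    (H : PB s w a * (PB s b c * PB s a b) = PB s w a * (PB s a b * PB s b c)) :
    ∃ σ : Equiv.Perm (Fin k), σ ≠ Equiv.refl (Fin k) ∧
      finProd (fun i => s (σ i)) = finProd s := by
  refine ⟨sigma ha hb hc, sigma_ne_refl ha hb hc, ?_⟩
  rw [finProd_eq_pr, finProd_eq_pr, ofFn_sigma s ha hb hc, ofFn_eq_seg s]
  have e2 : seg s 0 a = seg s 0 w ++ seg s w a := seg_append s (Nat.zero_le w) hw.le
  have e1 : seg s 0 k =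
      seg s 0 w ++ (seg s w a ++ (seg s a b ++ (seg s b c ++ seg s c k))) := by
    rw [seg_append s (Nat.zero_le w) (by omega : w ≤ k),
        seg_append s (by omega : w ≤ a) (by omega : a ≤ k),
        seg_append s (by omega : a ≤ b) (by omega : b ≤ k),
        seg_append s (by omega : b ≤ c) hc]
  rw [e1, e2, pr_append hz, pr_append hz, pr_append hz, pr_append hz, pr_append hz,
      pr_append hz, pr_append hz, pr_append hz,
      pr_seg hz s ha, pr_seg hz s hb, pr_seg hz s hw]
  rw [op_assoc hz (pr (seg s 0 w))]
  congr 1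
  rw [← op_assoc hz (some (PB s b c)), op_some_some,
      ← op_assoc hz (some (PB s a b)), op_some_some,
      ← op_assoc hz (some (PB s w a)) (some (PB s b c * PB s a b)), op_some_some,
      ← op_assoc hz (some (PB s w a)) (some (PB s a b * PB s b c)), op_some_some, H]

/-! #### Shapes of entries and matrices. -/

noncomputable def tid : TTz z := ttId 1 z zero_le_one

lemma tid_mul (x : TTz z) : tid * x = x := ttId_mul x

lemma mul_tid (hz : 0 ≤ z) (x : TTz z) : x * tid = x := by
  rw [t_mul_comm hz]; exact tid_mul x

/-- Shape of an element: `0` = the adjoined zero `-∞`, `1` = the identity `0`,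
`2` = an element of the interval `[1,z]`. -/
noncomputable def sh : TTz z → Fin 3
  | Adj0.zero => 0
  | Adj0.elem c => if c.1 = 0 then 1 else 2

noncomputable def shM (A : MM z) : Fin 2 → Fin 2 → Fin 3 := fun i j => sh (A i j)

lemma sh_bot {x : TTz z} (h : sh x = 0) : x = Adj0.zero := by
  cases x with
  | zero => rfl
  | elem c => simp only [sh] at h; split_ifs at h <;> simp at h

lemma sh_id {x : TTz z} (h : sh x = 1) : x = tid := by
  cases x with
  | zero => simp [sh] at h
  | elem c =>
    simp only [sh] at h
    split_ifs at h with hc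
    · show Adj0.elem c = Adj0.elem _
      congr 1
      exact Subtype.ext hc
    · simp at h

lemma sh_pos {x : TTz z} (h : sh x = 2) :
    ∃ c : TB z, x = Adj0.elem c ∧ 1 ≤ c.1 ∧ c.1 ≤ z := by
  cases x with
  | zero => simp [sh] at h
  | elem c =>
    simp only [sh] at h
    split_ifs at h with hc
    · simp at h
    · refine ⟨c, rfl, ?_, ?_⟩
      · rcases c.2 with h' | h'
        · exact absurd h' hc
        · exact h'.1
      · rcases c.2 with h' | h'
        · exact absurd h' hc
        · exact h'.2

/-! #### Quantitative lower bounds on entries. -/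

def big (r : ℝ) (x : TTz z) : Prop :=
  ∃ c : TB z, x = Adj0.elem c ∧ min r z ≤ c.1

lemma big_mono {r r' : ℝ} {x : TTz z} (h : r' ≤ r) (hb : big r x) : big r' x := by
  obtain ⟨c, rfl, hc⟩ := hb
  exact ⟨c, rfl, le_trans (min_le_min_right _ h) hc⟩

lemma big_mul (hz : 0 ≤ z) {r q : ℝ} (hr : 0 ≤ r) (hq : 0 ≤ q) {x y : TTz z}
    (hx : big r x) (hy : big q y) : big (r + q) (x * y) := by
  obtain ⟨c, rfl, hc⟩ := hx
  obtain ⟨d, rfl, hd⟩ := hy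
  refine ⟨c * d, by rw [Adj0.elem_mul_elem], ?_⟩
  rw [tb_mul_val hz]
  have h1 : min r z ≥ 0 := le_min hr hz
  have h2 : min q z ≥ 0 := le_min hq hz
  rcases le_total r z with h | h <;> rcases le_total q z with h' | h' <;>
    simp only [min_def] at * <;> split_ifs at * <;> linarith

lemma big_add_l {r : ℝ} {x y : TTz z} (hx : big r x) : big r (x + y) := by
  obtain ⟨c, rfl, hc⟩ := hx
  cases y with
  | zero => exact ⟨c, rfl, hc⟩
  | elem d =>
    refine ⟨c + d, by rw [Adj0.elem_add_elem], ?_⟩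
    rw [tb_add_val]
    exact le_trans hc (le_max_left _ _)

lemma big_add_r {r : ℝ} {x y : TTz z} (hy : big r y) : big r (x + y) := by
  rw [t_add_comm]; exact big_add_l hy

lemma big_of_pos {x : TTz z} (h : sh x = 2) : big 1 x := by
  obtain ⟨c, rfl, h1, _⟩ := sh_pos h
  exact ⟨c, rfl, le_trans (min_le_left _ _) h1⟩

lemma big_of_nonbot (hz : 0 ≤ z) {x : TTz z} (h : sh x ≠ 0) : big 0 x := by
  cases x with
  | zero => exact absurd rfl h
  | elem c =>
    refine ⟨c, rfl, ?_⟩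
    rw [min_eq_left hz]
    exact tb_nonneg c

lemma big_sat (hz1 : 1 ≤ z) {x : TTz z} (h : big z x) :
    x = Adj0.elem ⟨z, Or.inr ⟨hz1, le_refl z⟩⟩ := by
  obtain ⟨c, rfl, hc⟩ := h
  rw [min_self] at hc
  congr 1
  exact Subtype.ext (le_antisymm (tb_le_z (by linarith) c) hc)

/-! #### Multiplication laws for the special (triangular) shapes. -/

/-- Upper unitriangular: `[[0, *],[-∞, 0]]`; such matrices commute. -/
lemma upperUni_comm (hz : 0 ≤ z) {X Y : MM z}
    (hX : X 0 0 = tid ∧ X 1 0 = Adj0.zero ∧ X 1 1 = tid)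
    (hY : Y 0 0 = tid ∧ Y 1 0 = Adj0.zero ∧ Y 1 1 = tid) : X * Y = Y * X := by
  obtain ⟨x1, x2, x3⟩ := hX
  obtain ⟨y1, y2, y3⟩ := hY
  funext i j
  fin_cases i <;> fin_cases j <;>
    simp only [mul_apply, Fin.isValue, Fin.mk_zero, Fin.mk_one, x1, x2, x3, y1, y2, y3,
      tid_mul, mul_tid hz, Adj0.zero_mul, Adj0.mul_zero, Adj0.zero_add, Adj0.add_zero] <;>
    first
      | rfl
      | exact t_add_comm _ _

/-- Lower unitriangular: `[[0, -∞],[*, 0]]`; such matrices commute. -/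
lemma lowerUni_comm (hz : 0 ≤ z) {X Y : MM z}
    (hX : X 0 0 = tid ∧ X 0 1 = Adj0.zero ∧ X 1 1 = tid)
    (hY : Y 0 0 = tid ∧ Y 0 1 = Adj0.zero ∧ Y 1 1 = tid) : X * Y = Y * X := by
  obtain ⟨x1, x2, x3⟩ := hX
  obtain ⟨y1, y2, y3⟩ := hY
  funext i j
  fin_cases i <;> fin_cases j <;>
    simp only [mul_apply, Fin.isValue, Fin.mk_zero, Fin.mk_one, x1, x2, x3, y1, y2, y3,
      tid_mul, mul_tid hz, Adj0.zero_mul, Adj0.mul_zero, Adj0.zero_add, Adj0.add_zero] <;>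
    first
      | rfl
      | exact t_add_comm _ _

/-- Upper L-type: `[[0, *],[-∞, -∞]]`; the product of two of these is the second. -/
lemma Lmul (hz : 0 ≤ z) {X Y : MM z}
    (hX : X 0 0 = tid ∧ X 1 0 = Adj0.zero ∧ X 1 1 = Adj0.zero)
    (hY : Y 0 0 = tid ∧ Y 1 0 = Adj0.zero ∧ Y 1 1 = Adj0.zero) : X * Y = Y := by
  obtain ⟨x1, x2, x3⟩ := hX
  obtain ⟨y1, y2, y3⟩ := hY
  funext i j
  fin_cases i <;> fin_cases j <;>
    simp only [mul_apply, Fin.isValue, Fin.mk_zero, Fin.mk_one, x1, x2, x3, y1, y2, y3,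
      tid_mul, mul_tid hz, Adj0.zero_mul, Adj0.mul_zero, Adj0.zero_add, Adj0.add_zero] <;>
    try rfl

/-- Upper R-type: `[[-∞, *],[-∞, 0]]`; the product of two of these is the first. -/
lemma Rmul (hz : 0 ≤ z) {X Y : MM z}
    (hX : X 0 0 = Adj0.zero ∧ X 1 0 = Adj0.zero ∧ X 1 1 = tid)
    (hY : Y 0 0 = Adj0.zero ∧ Y 1 0 = Adj0.zero ∧ Y 1 1 = tid) : X * Y = X := by
  obtain ⟨x1, x2, x3⟩ := hX
  obtain ⟨y1, y2, y3⟩ := hY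
  funext i j
  fin_cases i <;> fin_cases j <;>
    simp only [mul_apply, Fin.isValue, Fin.mk_zero, Fin.mk_one, x1, x2, x3, y1, y2, y3,
      tid_mul, mul_tid hz, Adj0.zero_mul, Adj0.mul_zero, Adj0.zero_add, Adj0.add_zero] <;>
    try rfl

/-- Lower L-type: `[[-∞, -∞],[*, 0]]`; the product of two of these is the second. -/
lemma Lmul' (hz : 0 ≤ z) {X Y : MM z}
    (hX : X 0 0 = Adj0.zero ∧ X 0 1 = Adj0.zero ∧ X 1 1 = tid)
    (hY : Y 0 0 = Adj0.zero ∧ Y 0 1 = Adj0.zero ∧ Y 1 1 = tid) : X * Y = Y := by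
  obtain ⟨x1, x2, x3⟩ := hX
  obtain ⟨y1, y2, y3⟩ := hY
  funext i j
  fin_cases i <;> fin_cases j <;>
    simp only [mul_apply, Fin.isValue, Fin.mk_zero, Fin.mk_one, x1, x2, x3, y1, y2, y3,
      tid_mul, mul_tid hz, Adj0.zero_mul, Adj0.mul_zero, Adj0.zero_add, Adj0.add_zero] <;>
    try rfl

/-- Lower R-type: `[[0, -∞],[*, -∞]]`; the product of two of these is the first. -/
lemma Rmul' (hz : 0 ≤ z) {X Y : MM z}
    (hX : X 0 0 = tid ∧ X 0 1 = Adj0.zero ∧ X 1 1 = Adj0.zero)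
    (hY : Y 0 0 = tid ∧ Y 0 1 = Adj0.zero ∧ Y 1 1 = Adj0.zero) : X * Y = X := by
  obtain ⟨x1, x2, x3⟩ := hX
  obtain ⟨y1, y2, y3⟩ := hY
  funext i j
  fin_cases i <;> fin_cases j <;>
    simp only [mul_apply, Fin.isValue, Fin.mk_zero, Fin.mk_one, x1, x2, x3, y1, y2, y3,
      tid_mul, mul_tid hz, Adj0.zero_mul, Adj0.mul_zero, Adj0.zero_add, Adj0.add_zero] <;>
    try rfl

/-! #### Saturation of long block products. -/

lemma sat_loop0 (hz : 0 ≤ z) {k : ℕ} (s : Fin k → MM z) (u : ℕ → ℕ) (a : ℕ) :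
    ∀ n : ℕ, 1 ≤ n →
    (∀ r t, a ≤ r → r < t → t ≤ a + n → u r < u t) →
    (∀ r, a ≤ r → r < a + n → big 1 (PB s (u r) (u (r + 1)) 0 0)) →
    big n (PB s (u a) (u (a + n)) 0 0) := by
  intro n
  induction n with
  | zero => omega
  | succ m ih =>
    intro _ hmono hpos
    rcases Nat.eq_zero_or_pos m with rfl | hm
    · simpa using hpos a le_rfl (by omega)
    · have hmul : PB s (u a) (u (a + m + 1)) =
          PB s (u a) (u (a + m)) * PB s (u (a + m)) (u (a + m + 1)) :=
        PB_mul hz s (hmono a (a + m) le_rfl (by omega) (by omega))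
          (hmono (a + m) (a + m + 1) (by omega) (by omega) (by omega))
      have hIH : big m (PB s (u a) (u (a + m)) 0 0) :=
        ih hm (fun r t h1 h2 h3 => hmono r t h1 h2 (by omega))
          (fun r h1 h2 => hpos r h1 (by omega))
      have hstep : big 1 (PB s (u (a + m)) (u (a + m + 1)) 0 0) :=
        hpos (a + m) (by omega) (by omega)
      have := big_add_l (y := PB s (u a) (u (a + m)) 0 1 *
          PB s (u (a + m)) (u (a + m + 1)) 1 0)
        (big_mul hz (by positivity) zero_le_one hIH hstep)
      rw [← mul_apply, ← hmul] at this
      rw [show a + (m + 1) = a + m + 1 by omega]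
      convert this using 2
      push_cast; ring

lemma sat_loop1 (hz : 0 ≤ z) {k : ℕ} (s : Fin k → MM z) (u : ℕ → ℕ) (a : ℕ) :
    ∀ n : ℕ, 1 ≤ n →
    (∀ r t, a ≤ r → r < t → t ≤ a + n → u r < u t) →
    (∀ r, a ≤ r → r < a + n → big 1 (PB s (u r) (u (r + 1)) 1 1)) →
    big n (PB s (u a) (u (a + n)) 1 1) := by
  intro n
  induction n with
  | zero => omega
  | succ m ih =>
    intro _ hmono hpos
    rcases Nat.eq_zero_or_pos m with rfl | hm
    · simpa using hpos a le_rfl (by omega)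
    · have hmul : PB s (u a) (u (a + m + 1)) =
          PB s (u a) (u (a + m)) * PB s (u (a + m)) (u (a + m + 1)) :=
        PB_mul hz s (hmono a (a + m) le_rfl (by omega) (by omega))
          (hmono (a + m) (a + m + 1) (by omega) (by omega) (by omega))
      have hIH : big m (PB s (u a) (u (a + m)) 1 1) :=
        ih hm (fun r t h1 h2 h3 => hmono r t h1 h2 (by omega))
          (fun r h1 h2 => hpos r h1 (by omega))
      have hstep : big 1 (PB s (u (a + m)) (u (a + m + 1)) 1 1) :=
        hpos (a + m) (by omega) (by omega)
      have := big_add_r (x := PB s (u a) (u (a + m)) 1 0 *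
          PB s (u (a + m)) (u (a + m + 1)) 0 1)
        (big_mul hz (by positivity) zero_le_one hIH hstep)
      rw [← mul_apply, ← hmul] at this
      rw [show a + (m + 1) = a + m + 1 by omega]
      convert this using 2
      push_cast; ring

/-- One flip-flop pair starting and ending at state 0. -/
lemma pair00 (hz : 0 ≤ z) {k : ℕ} (s : Fin k → MM z) (u : ℕ → ℕ) (r : ℕ)
    (h1 : u r < u (r + 1)) (h2 : u (r + 1) < u (r + 2))
    (h01 : big 1 (PB s (u r) (u (r + 1)) 0 1))
    (h10 : big 0 (PB s (u (r + 1)) (u (r + 2)) 1 0)) :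
    big 1 (PB s (u r) (u (r + 2)) 0 0) := by
  rw [PB_mul hz s h1 h2, mul_apply]
  have := big_add_r (x := PB s (u r) (u (r + 1)) 0 0 *
      PB s (u (r + 1)) (u (r + 2)) 0 0)
    (big_mul hz zero_le_one le_rfl h01 h10)
  simpa using this

/-- One flip-flop pair starting and ending at state 1. -/
lemma pair11 (hz : 0 ≤ z) {k : ℕ} (s : Fin k → MM z) (u : ℕ → ℕ) (r : ℕ)
    (h1 : u r < u (r + 1)) (h2 : u (r + 1) < u (r + 2))
    (h10 : big 1 (PB s (u r) (u (r + 1)) 1 0))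
    (h01 : big 0 (PB s (u (r + 1)) (u (r + 2)) 0 1)) :
    big 1 (PB s (u r) (u (r + 2)) 1 1) := by
  rw [PB_mul hz s h1 h2, mul_apply]
  have := big_add_l (y := PB s (u r) (u (r + 1)) 1 1 *
      PB s (u (r + 1)) (u (r + 2)) 1 1)
    (big_mul hz zero_le_one le_rfl h10 h01)
  simpa using this

lemma sat_flip0 (hz : 0 ≤ z) {k : ℕ} (s : Fin k → MM z) (u : ℕ → ℕ) (a : ℕ) :
    ∀ n : ℕ, 1 ≤ n →
    (∀ r t, a ≤ r → r < t → t ≤ a + 2 * n → u r < u t) →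
    (∀ r, a ≤ r → r < a + 2 * n → big 1 (PB s (u r) (u (r + 1)) 0 1)) →
    (∀ r, a ≤ r → r < a + 2 * n → big 0 (PB s (u r) (u (r + 1)) 1 0)) →
    big n (PB s (u a) (u (a + 2 * n)) 0 0) := by
  intro n
  induction n with
  | zero => omega
  | succ m ih =>
    intro _ hmono h01 h10
    have hpair : big 1 (PB s (u (a + 2 * m)) (u (a + 2 * m + 2)) 0 0) := by
      apply pair00 hz s u (a + 2 * m)
        (hmono _ _ (by omega) (by omega) (by omega))
        (hmono _ _ (by omega) (by omega) (by omega))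
        (h01 _ (by omega) (by omega))
      have := h10 (a + 2 * m + 1) (by omega) (by omega)
      convert this using 3 <;> omega
    rcases Nat.eq_zero_or_pos m with rfl | hm
    · have : a + 2 * 1 = a + 2 * 0 + 2 := by omega
      rw [this]
      simpa using hpair
    · have hmul : PB s (u a) (u (a + 2 * m + 2)) =
          PB s (u a) (u (a + 2 * m)) * PB s (u (a + 2 * m)) (u (a + 2 * m + 2)) :=
        PB_mul hz s (hmono a (a + 2 * m) le_rfl (by omega) (by omega))
          (hmono (a + 2 * m) (a + 2 * m + 2) (by omega) (by omega) (by omega))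
      have hIH : big m (PB s (u a) (u (a + 2 * m)) 0 0) :=
        ih hm (fun r t p1 p2 p3 => hmono r t p1 p2 (by omega))
          (fun r p1 p2 => h01 r p1 (by omega)) (fun r p1 p2 => h10 r p1 (by omega))
      have := big_add_l (y := PB s (u a) (u (a + 2 * m)) 0 1 *
          PB s (u (a + 2 * m)) (u (a + 2 * m + 2)) 1 0)
        (big_mul hz (by positivity) zero_le_one hIH hpair)
      rw [← mul_apply, ← hmul] at this
      rw [show a + 2 * (m + 1) = a + 2 * m + 2 by omega]
      convert this using 2
      push_cast; ring

lemma sat_flip1 (hz : 0 ≤ z) {k : ℕ} (s : Fin k → MM z) (u : ℕ → ℕ) (a : ℕ) :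
    ∀ n : ℕ, 1 ≤ n →
    (∀ r t, a ≤ r → r < t → t ≤ a + 2 * n → u r < u t) →
    (∀ r, a ≤ r → r < a + 2 * n → big 1 (PB s (u r) (u (r + 1)) 1 0)) →
    (∀ r, a ≤ r → r < a + 2 * n → big 0 (PB s (u r) (u (r + 1)) 0 1)) →
    big n (PB s (u a) (u (a + 2 * n)) 1 1) := by
  intro n
  induction n with
  | zero => omega
  | succ m ih =>
    intro _ hmono h10 h01
    have hpair : big 1 (PB s (u (a + 2 * m)) (u (a + 2 * m + 2)) 1 1) := by
      apply pair11 hz s u (a + 2 * m)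
        (hmono _ _ (by omega) (by omega) (by omega))
        (hmono _ _ (by omega) (by omega) (by omega))
        (h10 _ (by omega) (by omega))
      have := h01 (a + 2 * m + 1) (by omega) (by omega)
      convert this using 3 <;> omega
    rcases Nat.eq_zero_or_pos m with rfl | hm
    · have : a + 2 * 1 = a + 2 * 0 + 2 := by omega
      rw [this]
      simpa using hpair
    · have hmul : PB s (u a) (u (a + 2 * m + 2)) =
          PB s (u a) (u (a + 2 * m)) * PB s (u (a + 2 * m)) (u (a + 2 * m + 2)) :=
        PB_mul hz s (hmono a (a + 2 * m) le_rfl (by omega) (by omega))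
          (hmono (a + 2 * m) (a + 2 * m + 2) (by omega) (by omega) (by omega))
      have hIH : big m (PB s (u a) (u (a + 2 * m)) 1 1) :=
        ih hm (fun r t p1 p2 p3 => hmono r t p1 p2 (by omega))
          (fun r p1 p2 => h10 r p1 (by omega)) (fun r p1 p2 => h01 r p1 (by omega))
      have := big_add_r (x := PB s (u a) (u (a + 2 * m)) 1 0 *
          PB s (u (a + 2 * m)) (u (a + 2 * m + 2)) 0 1)
        (big_mul hz (by positivity) zero_le_one hIH hpair)
      rw [← mul_apply, ← hmul] at this
      rw [show a + 2 * (m + 1) = a + 2 * m + 2 by omega]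
      convert this using 2
      push_cast; ring

/-- The "rigid" matrix associated to a shape: `-∞`/`0`/`z` entries. -/
noncomputable def rigid (hz1 : 1 ≤ z) (E : Fin 2 → Fin 2 → Fin 3) : MM z :=
  fun i j => if E i j = 0 then Adj0.zero else if E i j = 1 then tid
    else Adj0.elem ⟨z, Or.inr ⟨hz1, le_refl z⟩⟩

lemma fin3 (x : Fin 3) : x = 0 ∨ x = 1 ∨ x = 2 := by fin_cases x <;> simp

lemma rigid_bot {hz1 : 1 ≤ z} {E : Fin 2 → Fin 2 → Fin 3} {i j : Fin 2}
    (h : E i j = 0) : rigid hz1 E i j = Adj0.zero := by simp [rigid, h]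

lemma rigid_id {hz1 : 1 ≤ z} {E : Fin 2 → Fin 2 → Fin 3} {i j : Fin 2}
    (h : E i j = 1) : rigid hz1 E i j = tid := by simp [rigid, h]

lemma rigid_pos {hz1 : 1 ≤ z} {E : Fin 2 → Fin 2 → Fin 3} {i j : Fin 2}
    (h : E i j = 2) : rigid hz1 E i j = Adj0.elem ⟨z, Or.inr ⟨hz1, le_refl z⟩⟩ := by
  simp [rigid, h]

/-- The key saturation lemma: a product of `Q = 2N+2` consecutive blocks, all of whose
sub-block products have the same non-special shape `E`, equals the rigid matrix of `E`. -/
lemma sat_block (hz1 : 1 ≤ z) {k : ℕ} (s : Fin k → MM z) (u : ℕ → ℕ)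
    (E : Fin 2 → Fin 2 → Fin 3) (N Q a : ℕ) (hN : z ≤ N) (hN1 : 1 ≤ N)
    (hQ : Q = 2 * N + 2)
    (hmono : ∀ r t, a ≤ r → r < t → t ≤ a + Q → u r < u t)
    (hsh : ∀ r t, a ≤ r → r < t → t ≤ a + Q → shM (PB s (u r) (u t)) = E)
    (hb01 : E 0 1 = 2 → (E 1 0 ≠ 0 ∨ E 0 0 = 2 ∨ E 1 1 = 2))
    (hb10 : E 1 0 = 2 → (E 0 1 ≠ 0 ∨ E 0 0 = 2 ∨ E 1 1 = 2)) :
    PB s (u a) (u (a + Q)) = rigid hz1 E := by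
  have hz : (0:ℝ) ≤ z := by linarith
  have hsub : ∀ r t, a ≤ r → r < t → t ≤ a + Q → ∀ i' j' : Fin 2,
      sh (PB s (u r) (u t) i' j') = E i' j' := fun r t h1 h2 h3 i' j' =>
    congrFun (congrFun (hsh r t h1 h2 h3) i') j'
  have hcast : (z:ℝ) ≤ ((Q - 1 : ℕ) : ℝ) := by
    have : (N:ℝ) ≤ ((Q - 1 : ℕ) : ℝ) := by
      have : N ≤ Q - 1 := by omega
      exact_mod_cast this
    linarith
  have hcastN : (z:ℝ) ≤ (N : ℝ) := hN
  -- saturation of the diagonal entries, over any block range of length n inside [a, a+Q]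
  have hloop0 : ∀ a' n, a ≤ a' → 1 ≤ n → a' + n ≤ a + Q → E 0 0 = 2 →
      big n (PB s (u a') (u (a' + n)) 0 0) := by
    intro a' n ha' hn1 hup hE
    exact sat_loop0 hz s u a' n hn1
      (fun r t p1 p2 p3 => hmono r t (by omega) p2 (by omega))
      (fun r p1 p2 => big_of_pos (by rw [hsub r (r+1) (by omega) (by omega) (by omega) 0 0, hE]))
  have hloop1 : ∀ a' n, a ≤ a' → 1 ≤ n → a' + n ≤ a + Q → E 1 1 = 2 →
      big n (PB s (u a') (u (a' + n)) 1 1) := by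
    intro a' n ha' hn1 hup hE
    exact sat_loop1 hz s u a' n hn1
      (fun r t p1 p2 p3 => hmono r t (by omega) p2 (by omega))
      (fun r p1 p2 => big_of_pos (by rw [hsub r (r+1) (by omega) (by omega) (by omega) 1 1, hE]))
  funext i j
  fin_cases i <;> fin_cases j
  -- entry (0,0)
  · show PB s (u a) (u (a + Q)) 0 0 = rigid hz1 E 0 0
    rcases fin3 (E 0 0) with hE | hE | hE
    · rw [rigid_bot hE, sh_bot ((hsub a (a+Q) le_rfl (by omega) le_rfl 0 0).trans hE)]
    · rw [rigid_id hE, sh_id ((hsub a (a+Q) le_rfl (by omega) le_rfl 0 0).trans hE)]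
    · rw [rigid_pos hE]
      apply big_sat hz1
      apply big_mono (show z ≤ ((Q:ℕ):ℝ) by
        have : ((Q-1:ℕ):ℝ) ≤ ((Q:ℕ):ℝ) := by exact_mod_cast Nat.sub_le Q 1
        linarith)
      exact hloop0 a Q le_rfl (by omega) le_rfl hE
  -- entry (0,1)
  · show PB s (u a) (u (a + Q)) 0 1 = rigid hz1 E 0 1
    rcases fin3 (E 0 1) with hE | hE | hE
    · rw [rigid_bot hE, sh_bot ((hsub a (a+Q) le_rfl (by omega) le_rfl 0 1).trans hE)]
    · rw [rigid_id hE, sh_id ((hsub a (a+Q) le_rfl (by omega) le_rfl 0 1).trans hE)]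
    · rw [rigid_pos hE]
      apply big_sat hz1
      rcases hb01 hE with hB | hB | hB
      · -- flip-flop at 0, then jump
        have hflip : big N (PB s (u a) (u (a + 2 * N)) 0 0) :=
          sat_flip0 hz s u a N hN1
            (fun r t p1 p2 p3 => hmono r t p1 p2 (by omega))
            (fun r p1 p2 => big_of_pos
              (by rw [hsub r (r+1) (by omega) (by omega) (by omega) 0 1, hE]))
            (fun r p1 p2 => big_of_nonbot hz
              (by rw [hsub r (r+1) (by omega) (by omega) (by omega) 1 0]; exact hB))
        have hmul : PB s (u a) (u (a + Q)) =
            PB s (u a) (u (a + 2 * N)) * PB s (u (a + 2 * N)) (u (a + Q)) :=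
          PB_mul hz s (hmono a (a + 2*N) le_rfl (by omega) (by omega))
            (hmono (a + 2*N) (a + Q) (by omega) (by omega) le_rfl)
        rw [hmul, mul_apply]
        apply big_mono (show z ≤ (N:ℝ) + 0 by linarith)
        apply big_add_l
        exact big_mul hz (by positivity) le_rfl hflip
          (big_of_nonbot hz (by
            rw [hsub (a + 2*N) (a + Q) (by omega) (by omega) le_rfl 0 1, hE]; decide))
      · -- loop at 0, then jump
        have hloop := hloop0 a (Q - 1) le_rfl (by omega) (by omega) hB
        have hmul : PB s (u a) (u (a + Q)) =
            PB s (u a) (u (a + (Q - 1))) * PB s (u (a + (Q - 1))) (u (a + Q)) :=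
          PB_mul hz s (hmono a (a + (Q-1)) le_rfl (by omega) (by omega))
            (hmono (a + (Q-1)) (a + Q) (by omega) (by omega) le_rfl)
        rw [hmul, mul_apply]
        apply big_mono (show z ≤ ((Q-1:ℕ):ℝ) + 0 by linarith)
        apply big_add_l
        exact big_mul hz (by positivity) le_rfl hloop
          (big_of_nonbot hz (by
            rw [hsub (a + (Q-1)) (a + Q) (by omega) (by omega) le_rfl 0 1, hE]; decide))
      · -- jump, then loop at 1
        have hloop := hloop1 (a + 1) (Q - 1) (by omega) (by omega) (by omega) hB
        have hmul : PB s (u a) (u (a + Q)) =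
            PB s (u a) (u (a + 1)) * PB s (u (a + 1)) (u (a + 1 + (Q - 1))) := by
          rw [show a + 1 + (Q - 1) = a + Q by omega]
          exact PB_mul hz s (hmono a (a+1) le_rfl (by omega) (by omega))
            (hmono (a+1) (a+Q) (by omega) (by omega) le_rfl)
        rw [hmul, mul_apply]
        apply big_mono (show z ≤ 0 + ((Q-1:ℕ):ℝ) by linarith)
        apply big_add_r
        exact big_mul hz le_rfl (by positivity)
          (big_of_nonbot hz (by
            rw [hsub a (a+1) le_rfl (by omega) (by omega) 0 1, hE]; decide))
          hloop
  -- entry (1,0)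
  · show PB s (u a) (u (a + Q)) 1 0 = rigid hz1 E 1 0
    rcases fin3 (E 1 0) with hE | hE | hE
    · rw [rigid_bot hE, sh_bot ((hsub a (a+Q) le_rfl (by omega) le_rfl 1 0).trans hE)]
    · rw [rigid_id hE, sh_id ((hsub a (a+Q) le_rfl (by omega) le_rfl 1 0).trans hE)]
    · rw [rigid_pos hE]
      apply big_sat hz1
      rcases hb10 hE with hB | hB | hB
      · -- flip-flop at 1, then jump down
        have hflip : big N (PB s (u a) (u (a + 2 * N)) 1 1) :=
          sat_flip1 hz s u a N hN1
            (fun r t p1 p2 p3 => hmono r t p1 p2 (by omega))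
            (fun r p1 p2 => big_of_pos
              (by rw [hsub r (r+1) (by omega) (by omega) (by omega) 1 0, hE]))
            (fun r p1 p2 => big_of_nonbot hz
              (by rw [hsub r (r+1) (by omega) (by omega) (by omega) 0 1]; exact hB))
        have hmul : PB s (u a) (u (a + Q)) =
            PB s (u a) (u (a + 2 * N)) * PB s (u (a + 2 * N)) (u (a + Q)) :=
          PB_mul hz s (hmono a (a + 2*N) le_rfl (by omega) (by omega))
            (hmono (a + 2*N) (a + Q) (by omega) (by omega) le_rfl)
        rw [hmul, mul_apply]
        apply big_mono (show z ≤ (N:ℝ) + 0 by linarith)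
        apply big_add_r
        exact big_mul hz (by positivity) le_rfl hflip
          (big_of_nonbot hz (by
            rw [hsub (a + 2*N) (a + Q) (by omega) (by omega) le_rfl 1 0, hE]; decide))
      · -- jump down, then loop at 0
        have hloop := hloop0 (a + 1) (Q - 1) (by omega) (by omega) (by omega) hB
        have hmul : PB s (u a) (u (a + Q)) =
            PB s (u a) (u (a + 1)) * PB s (u (a + 1)) (u (a + 1 + (Q - 1))) := by
          rw [show a + 1 + (Q - 1) = a + Q by omega]
          exact PB_mul hz s (hmono a (a+1) le_rfl (by omega) (by omega))
            (hmono (a+1) (a+Q) (by omega) (by omega) le_rfl)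
        rw [hmul, mul_apply]
        apply big_mono (show z ≤ 0 + ((Q-1:ℕ):ℝ) by linarith)
        apply big_add_l
        exact big_mul hz le_rfl (by positivity)
          (big_of_nonbot hz (by
            rw [hsub a (a+1) le_rfl (by omega) (by omega) 1 0, hE]; decide))
          hloop
      · -- loop at 1, then jump down
        have hloop := hloop1 a (Q - 1) le_rfl (by omega) (by omega) hB
        have hmul : PB s (u a) (u (a + Q)) =
            PB s (u a) (u (a + (Q - 1))) * PB s (u (a + (Q - 1))) (u (a + Q)) :=
          PB_mul hz s (hmono a (a + (Q-1)) le_rfl (by omega) (by omega))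
            (hmono (a + (Q-1)) (a + Q) (by omega) (by omega) le_rfl)
        rw [hmul, mul_apply]
        apply big_mono (show z ≤ ((Q-1:ℕ):ℝ) + 0 by linarith)
        apply big_add_r
        exact big_mul hz (by positivity) le_rfl hloop
          (big_of_nonbot hz (by
            rw [hsub (a + (Q-1)) (a + Q) (by omega) (by omega) le_rfl 1 0, hE]; decide))
  -- entry (1,1)
  · show PB s (u a) (u (a + Q)) 1 1 = rigid hz1 E 1 1
    rcases fin3 (E 1 1) with hE | hE | hE
    · rw [rigid_bot hE, sh_bot ((hsub a (a+Q) le_rfl (by omega) le_rfl 1 1).trans hE)]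
    · rw [rigid_id hE, sh_id ((hsub a (a+Q) le_rfl (by omega) le_rfl 1 1).trans hE)]
    · rw [rigid_pos hE]
      apply big_sat hz1
      apply big_mono (show z ≤ ((Q:ℕ):ℝ) by
        have : ((Q-1:ℕ):ℝ) ≤ ((Q:ℕ):ℝ) := by exact_mod_cast Nat.sub_le Q 1
        linarith)
      exact hloop1 a Q le_rfl (by omega) le_rfl hE

end Stmt18

/-! #### Finite Ramsey theorem for pairs. -/

namespace Stmt18Ramsey

variable {C : Type} [DecidableEq C] [Fintype C]

lemma pre_ramsey (L : ℕ) : ∀ A : Finset ℕ, (Fintype.card C + 1) ^ L ≤ A.card →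
    ∀ col : ℕ → ℕ → C, ∃ v : ℕ → ℕ,
      (∀ i j, i < j → j ≤ L → v i < v j) ∧
      (∀ i, i ≤ L → v i ∈ A) ∧
      (∀ i j j', i < j → j ≤ L → i < j' → j' ≤ L →
        col (v i) (v j) = col (v i) (v j')) := by
  induction L with
  | zero =>
    intro A hA col
    have hA' : A.Nonempty := Finset.card_pos.mp (by simpa using hA)
    exact ⟨fun _ => A.min' hA', fun i j h1 h2 => by omega,
      fun i _ => A.min'_mem hA', fun i j j' h1 h2 _ _ => by omega⟩
  | succ L ih =>
    intro A hA col
    set q := Fintype.card C with hqdef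
    have hq : 1 ≤ q := Fintype.card_pos_iff.mpr ⟨col 0 0⟩
    have hq1 : 1 ≤ (q + 1) ^ L := Nat.one_le_pow _ _ (by omega)
    have hpow : (q + 1) ^ (L + 1) = (q + 1) ^ L * (q + 1) := pow_succ _ _
    have hAne : A.Nonempty := by
      apply Finset.card_pos.mp
      have : 1 ≤ (q + 1) ^ (L + 1) := Nat.one_le_pow _ _ (by omega)
      omega
    set a := A.min' hAne with ha
    have haA : a ∈ A := A.min'_mem hAne
    set A' := A.erase a with hA'def
    have hA'card : A'.card = A.card - 1 := Finset.card_erase_of_mem haA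
    have hpig : ∃ c : C, ((q + 1) ^ L - 1) <
        (A'.filter (fun x => col a x = c)).card := by
      have hmap : ∀ x ∈ A', col a x ∈ (Finset.univ : Finset C) :=
        fun x _ => Finset.mem_univ _
      have hcard : (Finset.univ : Finset C).card * ((q + 1) ^ L - 1) < A'.card := by
        rw [Finset.card_univ, ← hqdef]
        have key : q * ((q + 1) ^ L - 1) + 1 < (q + 1) ^ L * (q + 1) := by
          obtain ⟨p, hp⟩ : ∃ p, (q + 1) ^ L = p + 1 := ⟨(q + 1) ^ L - 1, by omega⟩
          rw [hp]
          have h1 : (p + 1) * (q + 1) = p * q + p + q + 1 := by ring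
          have h2 : q * (p + 1 - 1) = p * q := by rw [Nat.add_sub_cancel]; ring
          rw [h1, h2]
          omega
        omega
      obtain ⟨c, _, hc⟩ :=
        Finset.exists_lt_card_fiber_of_mul_lt_card_of_maps_to hmap hcard
      exact ⟨c, hc⟩
    obtain ⟨c, hc⟩ := hpig
    set B := A'.filter (fun x => col a x = c) with hBdef
    have hBcard : (q + 1) ^ L ≤ B.card := by omega
    obtain ⟨v', hmono', hmem', hcol'⟩ := ih B hBcard col
    have hBsub : ∀ x ∈ B, x ∈ A' := fun x hx => (Finset.mem_filter.mp hx).1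
    have hBcol : ∀ x ∈ B, col a x = c := fun x hx => (Finset.mem_filter.mp hx).2
    refine ⟨fun i => if i = 0 then a else v' (i - 1), ?_, ?_, ?_⟩
    · intro i j h1 h2
      rcases Nat.eq_zero_or_pos i with rfl | hi
      · simp only [if_pos rfl, if_true, if_neg (by omega : ¬ j = 0)]
        exact Finset.min'_lt_of_mem_erase_min' A hAne
          (hBsub _ (hmem' (j - 1) (by omega)))
      · simp only [if_neg (by omega : ¬ i = 0), if_neg (by omega : ¬ j = 0)]
        exact hmono' (i - 1) (j - 1) (by omega) (by omega)
    · intro i hi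
      rcases Nat.eq_zero_or_pos i with rfl | hi0
      · simpa using haA
      · simp only [if_neg (by omega : ¬ i = 0)]
        exact Finset.mem_of_mem_erase (hBsub _ (hmem' (i - 1) (by omega)))
    · intro i j j' h1 h2 h3 h4
      rcases Nat.eq_zero_or_pos i with rfl | hi
      · simp only [if_pos rfl, if_true, if_neg (by omega : ¬ j = 0), if_neg (by omega : ¬ j' = 0)]
        rw [hBcol _ (hmem' (j - 1) (by omega)), hBcol _ (hmem' (j' - 1) (by omega))]
      · simp only [if_neg (by omega : ¬ i = 0), if_neg (by omega : ¬ j = 0),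
          if_neg (by omega : ¬ j' = 0)]
        exact hcol' (i - 1) (j - 1) (j' - 1) (by omega) (by omega) (by omega) (by omega)

lemma ramsey_pairs (m : ℕ) : ∃ n : ℕ, ∀ col : ℕ → ℕ → C,
    ∃ (u : ℕ → ℕ) (E : C),
      (∀ i j, i < j → j ≤ m → u i < u j) ∧ (∀ i, i ≤ m → u i < n) ∧
      (∀ i j, i < j → j ≤ m → col (u i) (u j) = E) := by
  classical
  set q := Fintype.card C with hqdef
  set L := q * m + 1 with hLdef
  refine ⟨(q + 1) ^ L, ?_⟩
  intro col
  have hq : 1 ≤ q := Fintype.card_pos_iff.mpr ⟨col 0 0⟩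
  obtain ⟨v, hmono, hmem, hcol⟩ :=
    pre_ramsey L (Finset.range ((q + 1) ^ L)) (by simp [hqdef]) col
  have hpig : ∃ c : C, m <
      ((Finset.range L).filter (fun i => col (v i) (v (i + 1)) = c)).card := by
    have hmap : ∀ x ∈ Finset.range L,
        col (v x) (v (x + 1)) ∈ (Finset.univ : Finset C) := fun x _ => Finset.mem_univ _
    have hcard : (Finset.univ : Finset C).card * m < (Finset.range L).card := by
      rw [Finset.card_univ, ← hqdef, Finset.card_range]
      omega
    obtain ⟨c, _, hc⟩ :=
      Finset.exists_lt_card_fiber_of_mul_lt_card_of_maps_to hmap hcard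
    exact ⟨c, hc⟩
  obtain ⟨c, hc⟩ := hpig
  set F := (Finset.range L).filter (fun i => col (v i) (v (i + 1)) = c) with hFdef
  have hFc : m + 1 ≤ F.card := hc
  set e := F.orderEmbOfCardLe hFc with hedef
  have heF : ∀ r : Fin (m + 1), e r ∈ F := fun r => Finset.orderEmbOfCardLe_mem F hFc r
  have heL : ∀ r : Fin (m + 1), e r < L := fun r =>
    Finset.mem_range.mp (Finset.mem_filter.mp (heF r)).1
  have heC : ∀ r : Fin (m + 1), col (v (e r)) (v (e r + 1)) = c := fun r =>
    (Finset.mem_filter.mp (heF r)).2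
  refine ⟨fun i => v (e ⟨min i m, by omega⟩), c, ?_, ?_, ?_⟩
  · intro i j h1 h2
    have hee : e ⟨min i m, by omega⟩ < e ⟨min j m, by omega⟩ := by
      apply e.strictMono
      show (⟨min i m, _⟩ : Fin (m + 1)) < ⟨min j m, _⟩
      rw [Fin.mk_lt_mk]
      omega
    exact hmono _ _ hee (by have := heL ⟨min j m, by omega⟩; omega)
  · intro i hi
    have := hmem (e ⟨min i m, by omega⟩) (by have := heL ⟨min i m, by omega⟩; omega)
    exact Finset.mem_range.mp this
  · intro i j h1 h2
    have hee : e ⟨min i m, by omega⟩ < e ⟨min j m, by omega⟩ := by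
      apply e.strictMono
      show (⟨min i m, _⟩ : Fin (m + 1)) < ⟨min j m, _⟩
      rw [Fin.mk_lt_mk]
      omega
    have h5 := heL ⟨min i m, by omega⟩
    have h6 := heL ⟨min j m, by omega⟩
    rw [hcol (e ⟨min i m, by omega⟩) (e ⟨min j m, by omega⟩) (e ⟨min i m, by omega⟩ + 1)
      hee (by omega) (by omega) (by omega)]
    exact heC _

end Stmt18Ramsey

open Stmt18 in
/-- for every real `z > 2`, `M_2(𝕋_{[1,z]})` is strongly permutable. -/
theorem stmt_18 (z : ℝ) (hz : 2 < z) :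
    StronglyPermutable (MatSR (TT 1 z zero_le_one) 2) := by
  classical
  have hz0 : (0:ℝ) ≤ z := by linarith
  have hz1 : (1:ℝ) ≤ z := by linarith
  obtain ⟨N, hN⟩ := exists_nat_ge z
  have hN1 : 1 ≤ N := by
    have h2 : (2:ℝ) < (N:ℝ) := lt_of_lt_of_le hz hN
    have : 2 < N := by exact_mod_cast h2
    omega
  set Q := 2 * N + 2 with hQ
  set m := 2 * Q + 4 with hm
  obtain ⟨n, hn⟩ := Stmt18Ramsey.ramsey_pairs (C := Fin 2 → Fin 2 → Fin 3) m
  refine ⟨n + 2, by omega, ?_⟩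
  intro s
  obtain ⟨u, E, hmono, hub, hcol⟩ := hn (fun i j => shM (PB s i j))
  have hukb : ∀ i, i ≤ m → u i < n + 2 := fun i hi => by
    have := hub i hi; omega
  have hcol' : ∀ i j, i < j → j ≤ m → ∀ p q : Fin 2,
      sh (PB s (u i) (u j) p q) = E p q := fun i j h1 h2 p q =>
    congrFun (congrFun (hcol i j h1 h2) p) q
  by_cases hUS : E 0 1 = 2 ∧ E 1 0 = 0 ∧ E 0 0 ≠ 2 ∧ E 1 1 ≠ 2
  · -- upper triangular special shapes
    obtain ⟨e01, e10, e00, e11⟩ := hUS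
    rcases fin3 (E 0 0) with h00 | h00 | h00
    · rcases fin3 (E 1 1) with h11 | h11 | h11
      · -- E = [[⊥,P],[⊥,⊥]] : impossible
        exfalso
        have h1 := hcol' 0 2 (by omega) (by omega) 0 1
        have hmul : PB s (u 0) (u 2) = PB s (u 0) (u 1) * PB s (u 1) (u 2) :=
          PB_mul hz0 s (hmono 0 1 (by omega) (by omega))
            (hmono 1 2 (by omega) (by omega))
        have hx : PB s (u 0) (u 1) 0 0 = Adj0.zero :=
          sh_bot ((hcol' 0 1 (by omega) (by omega) 0 0).trans h00)
        have hy : PB s (u 1) (u 2) 1 1 = Adj0.zero :=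
          sh_bot ((hcol' 1 2 (by omega) (by omega) 1 1).trans h11)
        have hzero : PB s (u 0) (u 2) 0 1 = Adj0.zero := by
          rw [hmul, mul_apply, hx, hy, Adj0.zero_mul, Adj0.mul_zero, Adj0.add_zero]
        rw [hzero, e01] at h1
        simp [sh] at h1
      · -- E = [[⊥,P],[⊥,0]] : upper R-type
        have f : ∀ r, r + 1 ≤ m →
            (PB s (u r) (u (r+1)) 0 0 = Adj0.zero ∧
             PB s (u r) (u (r+1)) 1 0 = Adj0.zero ∧
             PB s (u r) (u (r+1)) 1 1 = tid) := fun r hr =>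
          ⟨sh_bot ((hcol' r (r+1) (by omega) hr 0 0).trans h00),
           sh_bot ((hcol' r (r+1) (by omega) hr 1 0).trans e10),
           sh_id ((hcol' r (r+1) (by omega) hr 1 1).trans h11)⟩
        apply swap_absorb_left hz0 s (hmono 0 1 (by omega) (by omega))
          (hmono 1 2 (by omega) (by omega)) (hmono 2 3 (by omega) (by omega))
          (le_of_lt (hukb 3 (by omega)))
        rw [Rmul hz0 (f 2 (by omega)) (f 1 (by omega)),
            Rmul hz0 (f 0 (by omega)) (f 2 (by omega)),
            Rmul hz0 (f 1 (by omega)) (f 2 (by omega)),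
            Rmul hz0 (f 0 (by omega)) (f 1 (by omega))]
      · exact absurd h11 e11
    · rcases fin3 (E 1 1) with h11 | h11 | h11
      · -- E = [[0,P],[⊥,⊥]] : upper L-type
        have f : ∀ r, r + 1 ≤ m →
            (PB s (u r) (u (r+1)) 0 0 = tid ∧
             PB s (u r) (u (r+1)) 1 0 = Adj0.zero ∧
             PB s (u r) (u (r+1)) 1 1 = Adj0.zero) := fun r hr =>
          ⟨sh_id ((hcol' r (r+1) (by omega) hr 0 0).trans h00),
           sh_bot ((hcol' r (r+1) (by omega) hr 1 0).trans e10),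
           sh_bot ((hcol' r (r+1) (by omega) hr 1 1).trans h11)⟩
        apply swap_absorb_right hz0 s (hmono 0 1 (by omega) (by omega))
          (hmono 1 2 (by omega) (by omega)) (hmono 2 3 (by omega) (by omega))
          (le_of_lt (hukb 3 (by omega)))
        rw [Lmul hz0 (f 1 (by omega)) (f 0 (by omega)),
            Lmul hz0 (f 0 (by omega)) (f 1 (by omega)),
            Lmul hz0 (f 0 (by omega)) (f 2 (by omega)),
            Lmul hz0 (f 1 (by omega)) (f 2 (by omega))]
      · -- E = [[0,P],[⊥,0]] : upper unitriangular, commuting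
        have f : ∀ r, r + 1 ≤ m →
            (PB s (u r) (u (r+1)) 0 0 = tid ∧
             PB s (u r) (u (r+1)) 1 0 = Adj0.zero ∧
             PB s (u r) (u (r+1)) 1 1 = tid) := fun r hr =>
          ⟨sh_id ((hcol' r (r+1) (by omega) hr 0 0).trans h00),
           sh_bot ((hcol' r (r+1) (by omega) hr 1 0).trans e10),
           sh_id ((hcol' r (r+1) (by omega) hr 1 1).trans h11)⟩
        apply swap_comm hz0 s (hmono 0 1 (by omega) (by omega))
          (hmono 1 2 (by omega) (by omega)) (le_of_lt (hukb 2 (by omega)))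
        exact upperUni_comm hz0 (f 1 (by omega)) (f 0 (by omega))
      · exact absurd h11 e11
    · exact absurd h00 e00
  · by_cases hLS : E 1 0 = 2 ∧ E 0 1 = 0 ∧ E 0 0 ≠ 2 ∧ E 1 1 ≠ 2
    · -- lower triangular special shapes
      obtain ⟨e10, e01, e00, e11⟩ := hLS
      rcases fin3 (E 0 0) with h00 | h00 | h00
      · rcases fin3 (E 1 1) with h11 | h11 | h11
        · -- E = [[⊥,⊥],[P,⊥]] : impossible
          exfalso
          have h1 := hcol' 0 2 (by omega) (by omega) 1 0
          have hmul : PB s (u 0) (u 2) = PB s (u 0) (u 1) * PB s (u 1) (u 2) :=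
            PB_mul hz0 s (hmono 0 1 (by omega) (by omega))
              (hmono 1 2 (by omega) (by omega))
          have hx : PB s (u 1) (u 2) 0 0 = Adj0.zero :=
            sh_bot ((hcol' 1 2 (by omega) (by omega) 0 0).trans h00)
          have hy : PB s (u 0) (u 1) 1 1 = Adj0.zero :=
            sh_bot ((hcol' 0 1 (by omega) (by omega) 1 1).trans h11)
          have hzero : PB s (u 0) (u 2) 1 0 = Adj0.zero := by
            rw [hmul, mul_apply, hx, hy, Adj0.zero_mul, Adj0.mul_zero, Adj0.add_zero]
          rw [hzero, e10] at h1
          simp [sh] at h1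
        · -- E = [[⊥,⊥],[P,0]] : lower L-type
          have f : ∀ r, r + 1 ≤ m →
              (PB s (u r) (u (r+1)) 0 0 = Adj0.zero ∧
               PB s (u r) (u (r+1)) 0 1 = Adj0.zero ∧
               PB s (u r) (u (r+1)) 1 1 = tid) := fun r hr =>
            ⟨sh_bot ((hcol' r (r+1) (by omega) hr 0 0).trans h00),
             sh_bot ((hcol' r (r+1) (by omega) hr 0 1).trans e01),
             sh_id ((hcol' r (r+1) (by omega) hr 1 1).trans h11)⟩
          apply swap_absorb_right hz0 s (hmono 0 1 (by omega) (by omega))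
            (hmono 1 2 (by omega) (by omega)) (hmono 2 3 (by omega) (by omega))
            (le_of_lt (hukb 3 (by omega)))
          rw [Lmul' hz0 (f 1 (by omega)) (f 0 (by omega)),
              Lmul' hz0 (f 0 (by omega)) (f 1 (by omega)),
              Lmul' hz0 (f 0 (by omega)) (f 2 (by omega)),
              Lmul' hz0 (f 1 (by omega)) (f 2 (by omega))]
        · exact absurd h11 e11
      · rcases fin3 (E 1 1) with h11 | h11 | h11
        · -- E = [[0,⊥],[P,⊥]] : lower R-type
          have f : ∀ r, r + 1 ≤ m →
              (PB s (u r) (u (r+1)) 0 0 = tid ∧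
               PB s (u r) (u (r+1)) 0 1 = Adj0.zero ∧
               PB s (u r) (u (r+1)) 1 1 = Adj0.zero) := fun r hr =>
            ⟨sh_id ((hcol' r (r+1) (by omega) hr 0 0).trans h00),
             sh_bot ((hcol' r (r+1) (by omega) hr 0 1).trans e01),
             sh_bot ((hcol' r (r+1) (by omega) hr 1 1).trans h11)⟩
          apply swap_absorb_left hz0 s (hmono 0 1 (by omega) (by omega))
            (hmono 1 2 (by omega) (by omega)) (hmono 2 3 (by omega) (by omega))
            (le_of_lt (hukb 3 (by omega)))
          rw [Rmul' hz0 (f 2 (by omega)) (f 1 (by omega)),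
              Rmul' hz0 (f 0 (by omega)) (f 2 (by omega)),
              Rmul' hz0 (f 1 (by omega)) (f 2 (by omega)),
              Rmul' hz0 (f 0 (by omega)) (f 1 (by omega))]
        · -- E = [[0,⊥],[P,0]] : lower unitriangular, commuting
          have f : ∀ r, r + 1 ≤ m →
              (PB s (u r) (u (r+1)) 0 0 = tid ∧
               PB s (u r) (u (r+1)) 0 1 = Adj0.zero ∧
               PB s (u r) (u (r+1)) 1 1 = tid) := fun r hr =>
            ⟨sh_id ((hcol' r (r+1) (by omega) hr 0 0).trans h00),
             sh_bot ((hcol' r (r+1) (by omega) hr 0 1).trans e01),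
             sh_id ((hcol' r (r+1) (by omega) hr 1 1).trans h11)⟩
          apply swap_comm hz0 s (hmono 0 1 (by omega) (by omega))
            (hmono 1 2 (by omega) (by omega)) (le_of_lt (hukb 2 (by omega)))
          exact lowerUni_comm hz0 (f 1 (by omega)) (f 0 (by omega))
        · exact absurd h11 e11
      · exact absurd h00 e00
    · -- generic case: long blocks saturate
      have hb01 : E 0 1 = 2 → (E 1 0 ≠ 0 ∨ E 0 0 = 2 ∨ E 1 1 = 2) := by
        intro h
        by_contra hcon
        push_neg at hcon
        exact hUS ⟨h, hcon.1, hcon.2.1, hcon.2.2⟩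
      have hb10 : E 1 0 = 2 → (E 0 1 ≠ 0 ∨ E 0 0 = 2 ∨ E 1 1 = 2) := by
        intro h
        by_contra hcon
        push_neg at hcon
        exact hLS ⟨h, hcon.1, hcon.2.1, hcon.2.2⟩
      have hS1 : PB s (u 1) (u (1 + Q)) = rigid hz1 E :=
        sat_block hz1 s u E N Q 1 hN hN1 hQ
          (fun r t p1 p2 p3 => hmono r t p2 (by omega))
          (fun r t p1 p2 p3 => hcol r t p2 (by omega))
          hb01 hb10
      have hS2 : PB s (u (1 + Q)) (u (1 + Q + Q)) = rigid hz1 E :=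
        sat_block hz1 s u E N Q (1 + Q) hN hN1 hQ
          (fun r t p1 p2 p3 => hmono r t p2 (by omega))
          (fun r t p1 p2 p3 => hcol r t p2 (by omega))
          hb01 hb10
      apply swap_comm hz0 s (hmono 1 (1 + Q) (by omega) (by omega))
        (hmono (1 + Q) (1 + Q + Q) (by omega) (by omega))
        (le_of_lt (hukb (1 + Q + Q) (by omega)))
      rw [hS1, hS2]
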